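/- arXiv:1402.2691 — 3 statements merged into one kernel-verified Lean document; each statement's English description precedes it below -/
import Mathlib

section
/- Let c₁ ≤ c₂ be real numbers and let t > 0 satisfy t < π/√c₂ if c₂ > 0. Then sn_{c₁}'(t)·sn_{c₂}(t) ≥ sn_{c₂}'(t)·sn_{c₁}(t); equivalently, since sn_{c₁}(t) > 0 and sn_{c₂}(t) > 0, the normal curvature μ^{c₁}(t) = sn_{c₁}'(t)/sn_{c₁}(t) of the geodesic sphere of radius t in the model space of curvature c₁ is at least μ^{c₂}(t) = sn_{c₂}'(t)/sn_{c₂}(t). -/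
/-- The generalized sine function `sn_c` of the simply connected space form
of constant curvature `c`. -/
noncomputable def gsin (c : ℝ) (t : ℝ) : ℝ :=
  if 0 < c then (1 / Real.sqrt c) * Real.sin (Real.sqrt c * t)
  else if c = 0 then t
  else (1 / Real.sqrt (-c)) * Real.sinh (Real.sqrt (-c) * t)

/-- The generalized cosine function. -/
noncomputable def gcos (c : ℝ) (t : ℝ) : ℝ :=
  if 0 < c then Real.cos (Real.sqrt c * t)
  else if c = 0 then 1
  else Real.cosh (Real.sqrt (-c) * t)

lemma gsin_zero (c : ℝ) : gsin c 0 = 0 := by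
  unfold gsin; split_ifs <;> simp

lemma hasDerivAt_gsin (c t : ℝ) : HasDerivAt (gsin c) (gcos c t) t := by
  rcases lt_trichotomy 0 c with h | h | h
  · have hs : Real.sqrt c ≠ 0 := by positivity
    have h1 : HasDerivAt (fun t : ℝ => Real.sqrt c * t) (Real.sqrt c) t := by
      simpa using (hasDerivAt_id t).const_mul (Real.sqrt c)
    have h2 := ((Real.hasDerivAt_sin (Real.sqrt c * t)).comp t h1).const_mul
      (1 / Real.sqrt c)
    have hfun : gsin c = fun t => (1 / Real.sqrt c) * Real.sin (Real.sqrt c * t) := by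
      funext s; simp [gsin, h]
    have : gcos c t = (1 / Real.sqrt c) * (Real.cos (Real.sqrt c * t) * Real.sqrt c) := by
      field_simp [gcos, h]
      simp [gcos, h]
    rw [hfun, this]
    exact h2
  · have hfun : gsin c = fun t => t := by funext s; simp [gsin, ← h]
    have : gcos c t = 1 := by simp [gcos, ← h]
    rw [hfun, this]; exact hasDerivAt_id t
  · have hc : ¬ 0 < c := by linarith
    have hc' : c ≠ 0 := by linarith
    have hs : Real.sqrt (-c) ≠ 0 := ne_of_gt (Real.sqrt_pos.mpr (by linarith))
    have h1 : HasDerivAt (fun t : ℝ => Real.sqrt (-c) * t) (Real.sqrt (-c)) t := by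
      simpa using (hasDerivAt_id t).const_mul (Real.sqrt (-c))
    have h2 := ((Real.hasDerivAt_sinh (Real.sqrt (-c) * t)).comp t h1).const_mul
      (1 / Real.sqrt (-c))
    have hfun : gsin c = fun t => (1 / Real.sqrt (-c)) * Real.sinh (Real.sqrt (-c) * t) := by
      funext s; simp [gsin, hc, hc']
    have : gcos c t = (1 / Real.sqrt (-c)) * (Real.cosh (Real.sqrt (-c) * t) * Real.sqrt (-c)) := by
      field_simp [gcos, hc, hc']
      simp [gcos, hc, hc']
    rw [hfun, this]
    exact h2

lemma hasDerivAt_gcos (c t : ℝ) : HasDerivAt (gcos c) (-c * gsin c t) t := by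
  rcases lt_trichotomy 0 c with h | h | h
  · have h1 : HasDerivAt (fun t : ℝ => Real.sqrt c * t) (Real.sqrt c) t := by
      simpa using (hasDerivAt_id t).const_mul (Real.sqrt c)
    have h2 := (Real.hasDerivAt_cos (Real.sqrt c * t)).comp t h1
    have hfun : gcos c = fun t => Real.cos (Real.sqrt c * t) := by
      funext s; simp [gcos, h]
    have hval : -c * gsin c t = -Real.sin (Real.sqrt c * t) * Real.sqrt c := by
      have hsq : Real.sqrt c * Real.sqrt c = c := Real.mul_self_sqrt h.le
      have hs : Real.sqrt c ≠ 0 := ne_of_gt (Real.sqrt_pos.mpr h)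
      field_simp [gsin, h]
      simp only [gsin, if_pos h]; rw [← mul_assoc, mul_one_div, Real.div_sqrt]
    rw [hfun, hval]; exact h2
  · have hfun : gcos c = fun _ => (1 : ℝ) := by funext s; simp [gcos, ← h]
    have : -c * gsin c t = 0 := by simp [← h]
    rw [hfun, this]; exact hasDerivAt_const t 1
  · have hc : ¬ 0 < c := by linarith
    have hc' : c ≠ 0 := by linarith
    have h1 : HasDerivAt (fun t : ℝ => Real.sqrt (-c) * t) (Real.sqrt (-c)) t := by
      simpa using (hasDerivAt_id t).const_mul (Real.sqrt (-c))
    have h2 := (Real.hasDerivAt_cosh (Real.sqrt (-c) * t)).comp t h1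
    have hfun : gcos c = fun t => Real.cosh (Real.sqrt (-c) * t) := by
      funext s; simp [gcos, hc, hc']
    have hval : -c * gsin c t = Real.sinh (Real.sqrt (-c) * t) * Real.sqrt (-c) := by
      have hsq : Real.sqrt (-c) * Real.sqrt (-c) = -c := Real.mul_self_sqrt (by linarith)
      have hs : Real.sqrt (-c) ≠ 0 := ne_of_gt (Real.sqrt_pos.mpr (by linarith))
      field_simp [gsin, hc, hc']
      simp only [gsin, if_neg hc, if_neg hc']; rw [← mul_assoc, mul_one_div, ← neg_mul, ← neg_div, Real.div_sqrt]
    rw [hfun, hval]; exact h2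

lemma gsin_pos {c s : ℝ} (hs : 0 < s) (h : 0 < c → Real.sqrt c * s < Real.pi) :
    0 < gsin c s := by
  rcases lt_trichotomy 0 c with hc | hc | hc
  · have hsq : 0 < Real.sqrt c := Real.sqrt_pos.mpr hc
    have : 0 < Real.sin (Real.sqrt c * s) :=
      Real.sin_pos_of_pos_of_lt_pi (by positivity) (h hc)
    simp only [gsin, if_pos hc]
    positivity
  · simp [gsin, ← hc, hs]
  · have hc1 : ¬ 0 < c := by linarith
    have hc2 : c ≠ 0 := by linarith
    have hsq : 0 < Real.sqrt (-c) := Real.sqrt_pos.mpr (by linarith)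
    have : 0 < Real.sinh (Real.sqrt (-c) * s) := by
      rw [Real.sinh_pos_iff]; positivity
    simp only [gsin, if_neg hc1, if_neg hc2]
    positivity

/-- Comparison of normal curvatures of geodesic spheres in space forms: if
`c₁ ≤ c₂` and `0 < t` (with `t < π/√c₂` when `c₂ > 0`), then
`sn_{c₁}'(t)·sn_{c₂}(t) ≥ sn_{c₂}'(t)·sn_{c₁}(t)`, equivalently
`sn_{c₁}'(t)/sn_{c₁}(t) ≥ sn_{c₂}'(t)/sn_{c₂}(t)`. -/
theorem gsin_sphere_normal_curvature_comparison (c₁ c₂ t : ℝ)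
    (hc : c₁ ≤ c₂) (ht : 0 < t) (ht' : 0 < c₂ → t < Real.pi / Real.sqrt c₂) :
    deriv (gsin c₂) t * gsin c₁ t ≤ deriv (gsin c₁) t * gsin c₂ t ∧
      deriv (gsin c₂) t / gsin c₂ t ≤ deriv (gsin c₁) t / gsin c₁ t := by
  -- positivity of gsin on (0, t]
  have key : ∀ c : ℝ, c ≤ c₂ → ∀ s : ℝ, 0 < s → s ≤ t → 0 < gsin c s := by
    intro c hcle s hs hst
    apply gsin_pos hs
    intro hcpos
    have hc2 : 0 < c₂ := lt_of_lt_of_le hcpos hcle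
    have hsq2 : 0 < Real.sqrt c₂ := Real.sqrt_pos.mpr hc2
    have h1 : Real.sqrt c * s ≤ Real.sqrt c₂ * s :=
      mul_le_mul_of_nonneg_right (Real.sqrt_le_sqrt hcle) hs.le
    have h2 : Real.sqrt c₂ * s ≤ Real.sqrt c₂ * t :=
      mul_le_mul_of_nonneg_left hst hsq2.le
    have h3 : Real.sqrt c₂ * t < Real.pi := by
      have := ht' hc2
      rw [lt_div_iff₀ hsq2] at this
      linarith [this]
    linarith
  set W : ℝ → ℝ := fun s => gcos c₁ s * gsin c₂ s - gcos c₂ s * gsin c₁ s with hW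
  have hWd : ∀ s : ℝ, HasDerivAt W ((c₂ - c₁) * (gsin c₁ s * gsin c₂ s)) s := by
    intro s
    have h := (((hasDerivAt_gcos c₁ s).mul (hasDerivAt_gsin c₂ s)).sub
      ((hasDerivAt_gcos c₂ s).mul (hasDerivAt_gsin c₁ s)))
    exact h.congr_deriv (by ring)
  have hmono : MonotoneOn W (Set.Icc 0 t) := by
    apply monotoneOn_of_deriv_nonneg (convex_Icc 0 t)
    · exact (Continuous.continuousOn (by
        have : ∀ s, DifferentiableAt ℝ W s := fun s => (hWd s).differentiableAt
        exact (Differentiable.continuous this)))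
    · intro s _
      exact ((hWd s).differentiableAt).differentiableWithinAt
    · intro s hsmem
      rw [interior_Icc] at hsmem
      rw [(hWd s).deriv]
      have h1 := key c₁ hc s hsmem.1 hsmem.2.le
      have h2 := key c₂ le_rfl s hsmem.1 hsmem.2.le
      have : 0 ≤ c₂ - c₁ := by linarith
      positivity
  have hW0 : W 0 = 0 := by simp [hW, gsin_zero]
  have hWt : 0 ≤ W t := by
    have := hmono (Set.left_mem_Icc.mpr ht.le) (Set.right_mem_Icc.mpr ht.le) ht.le
    rw [hW0] at this; exact this
  have hd1 : deriv (gsin c₁) t = gcos c₁ t := (hasDerivAt_gsin c₁ t).deriv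
  have hd2 : deriv (gsin c₂) t = gcos c₂ t := (hasDerivAt_gsin c₂ t).deriv
  have hp1 := key c₁ hc t ht le_rfl
  have hp2 := key c₂ le_rfl t ht le_rfl
  have hmain : gcos c₂ t * gsin c₁ t ≤ gcos c₁ t * gsin c₂ t := by
    have : W t = gcos c₁ t * gsin c₂ t - gcos c₂ t * gsin c₁ t := rfl
    linarith [hWt, this ▸ hWt]
  constructor
  · rw [hd1, hd2]; exact hmain
  · rw [hd1, hd2, div_le_div_iff₀ hp2 hp1]; exact hmain
end

section
/- (Blaschke's Rolling Theorem, part A, plane version with explicit boundary curve.) Let D ⊆ ℝ² be a compact convex set with nonempty interior whose frontier is the image of a twice continuously differentiable curve γ : ℝ → ℝ² with ‖γ'(s)‖ = 1 for all s, and let N : ℝ → ℝ² satisfy, for every s: ‖N(s)‖ = 1, ⟨γ'(s), N(s)⟩ = 0, and ⟨x − γ(s), N(s)⟩ ≥ 0 for all x ∈ D (so N is the inner unit normal along γ). Suppose λ > 0 and the signed curvature with respect to N satisfies ⟨γ''(s), N(s)⟩ ≥ λ for all s. Then for every s, D is contained in the closed ball of radius 1/λ centered at γ(s) + (1/λ)·N(s).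 -/
open scoped RealInnerProductSpace

noncomputable def Jrot : EuclideanSpace ℝ (Fin 2) →L[ℝ] EuclideanSpace ℝ (Fin 2) :=
  LinearMap.toContinuousLinearMap
  { toFun := fun x => WithLp.toLp 2 ![x 1, -(x 0)]
    map_add' := by intro x y; ext i; fin_cases i <;>
      simp [Matrix.cons_val_zero, Matrix.cons_val_one] <;> ring
    map_smul' := by intro c x; ext i; fin_cases i <;>
      simp [Matrix.cons_val_zero, Matrix.cons_val_one] <;> ring }

@[simp] lemma Jrot_apply_zero (x : EuclideanSpace ℝ (Fin 2)) : Jrot x 0 = x 1 := rfl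
@[simp] lemma Jrot_apply_one (x : EuclideanSpace ℝ (Fin 2)) : Jrot x 1 = -(x 0) := rfl

lemma inner_two (x y : EuclideanSpace ℝ (Fin 2)) : ⟪x, y⟫ = x 0 * y 0 + x 1 * y 1 := by
  simp [PiLp.inner_apply, Fin.sum_univ_two, RCLike.inner_apply, mul_comm]

lemma perp_decomp (a b : EuclideanSpace ℝ (Fin 2)) (ha : ⟪a, a⟫ = 1) (hab : ⟪a, b⟫ = 0) :
    b = ⟪b, Jrot a⟫ • Jrot a := by
  rw [inner_two] at ha hab
  rw [inner_two]
  ext i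
  fin_cases i <;> simp [PiLp.smul_apply, smul_eq_mul]
  · linear_combination (-(b 0)) * ha + a 0 * hab
  · linear_combination (-(b 1)) * ha + a 1 * hab

lemma pyth_two (a w : EuclideanSpace ℝ (Fin 2)) (ha : ⟪a, a⟫ = 1) :
    ‖w‖ ^ 2 = ⟪w, a⟫ ^ 2 + ⟪w, Jrot a⟫ ^ 2 := by
  rw [← real_inner_self_eq_norm_sq]
  rw [inner_two] at ha ⊢
  rw [inner_two, inner_two]
  simp only [Jrot_apply_zero, Jrot_apply_one]
  linear_combination (-(w 0 * w 0 + w 1 * w 1)) * ha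

lemma Jrot_inner (a b : EuclideanSpace ℝ (Fin 2)) : ⟪Jrot a, Jrot b⟫ = ⟪a, b⟫ := by
  rw [inner_two, inner_two]
  simp only [Jrot_apply_zero, Jrot_apply_one]
  ring

lemma Jrot_orth (a : EuclideanSpace ℝ (Fin 2)) : ⟪a, Jrot a⟫ = 0 := by
  rw [inner_two]
  simp only [Jrot_apply_zero, Jrot_apply_one]
  ring

lemma Jrot_Jrot (a : EuclideanSpace ℝ (Fin 2)) : Jrot (Jrot a) = -a := by
  ext i
  fin_cases i <;> simp


lemma ang_hasDerivAt (p q : ℝ → ℝ) (p' q' t : ℝ)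
    (hp : HasDerivAt p p' t) (hq : HasDerivAt q q' t)
    (hpos : 0 < Real.sqrt (p t ^ 2 + q t ^ 2) + p t) :
    HasDerivAt (fun s => 2 * Real.arctan (q s / (Real.sqrt (p s ^ 2 + q s ^ 2) + p s)))
      ((p t * q' - q t * p') / (p t ^ 2 + q t ^ 2)) t := by
  have hS : 0 < p t ^ 2 + q t ^ 2 := by
    rcases lt_or_ge 0 (p t ^ 2 + q t ^ 2) with h | h
    · exact h
    · have h0 : p t ^ 2 + q t ^ 2 = 0 := le_antisymm h (by positivity)
      have hp0 : p t = 0 := by nlinarith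
      rw [h0, Real.sqrt_zero, hp0] at hpos
      norm_num at hpos
  have hSd : HasDerivAt (fun s => p s ^ 2 + q s ^ 2)
      (2 * p t ^ 1 * p' + 2 * q t ^ 1 * q') t := by
    exact ((hp.pow 2).add (hq.pow 2)).congr_deriv (by norm_num)
  have hr : HasDerivAt (fun s => Real.sqrt (p s ^ 2 + q s ^ 2))
      ((2 * p t ^ 1 * p' + 2 * q t ^ 1 * q') / (2 * Real.sqrt (p t ^ 2 + q t ^ 2))) t :=
    hSd.sqrt (ne_of_gt hS)
  have hden := hr.add hp
  have hw := hq.div hden (ne_of_gt hpos)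
  have harc := (Real.hasDerivAt_arctan
      (q t / (Real.sqrt (p t ^ 2 + q t ^ 2) + p t))).comp t hw
  have := harc.const_mul (2:ℝ)
  refine this.congr_deriv (Eq.symm ?_)
  have hrt : Real.sqrt (p t ^ 2 + q t ^ 2) ^ 2 = p t ^ 2 + q t ^ 2 := Real.sq_sqrt hS.le
  have hrpos : 0 < Real.sqrt (p t ^ 2 + q t ^ 2) := Real.sqrt_pos.2 hS
  set r := Real.sqrt (p t ^ 2 + q t ^ 2) with hrdef
  simp only [Pi.add_apply, ← hrdef]
  rw [← hrt]
  field_simp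
  linear_combination ((-2:ℝ)*q'*r - p t*q' + q t*p') * hrt

lemma ang_mem (p q : ℝ) : 2 * Real.arctan (q / (Real.sqrt (p ^ 2 + q ^ 2) + p)) ∈
    Set.Ioo (-Real.pi) Real.pi := by
  constructor <;> nlinarith [Real.arctan_lt_pi_div_two (q / (Real.sqrt (p ^ 2 + q ^ 2) + p)),
    Real.neg_pi_div_two_lt_arctan (q / (Real.sqrt (p ^ 2 + q ^ 2) + p))]

lemma ang_pos (p q : ℝ) (hpos : 0 < Real.sqrt (p ^ 2 + q ^ 2) + p) (hq : 0 < q) :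
    0 < 2 * Real.arctan (q / (Real.sqrt (p ^ 2 + q ^ 2) + p)) := by
  have : (0:ℝ) < q / (Real.sqrt (p ^ 2 + q ^ 2) + p) := div_pos hq hpos
  have h := Real.arctan_strictMono this
  rw [Real.arctan_zero] at h
  linarith

lemma ang_neg (p q : ℝ) (hpos : 0 < Real.sqrt (p ^ 2 + q ^ 2) + p) (hq : q < 0) :
    2 * Real.arctan (q / (Real.sqrt (p ^ 2 + q ^ 2) + p)) < 0 := by
  have : q / (Real.sqrt (p ^ 2 + q ^ 2) + p) < 0 := div_neg_of_neg_of_pos hq hpos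
  have h := Real.arctan_strictMono this
  rw [Real.arctan_zero] at h
  linarith

lemma escape_forward (l : ℝ) (hl : 0 < l) (u v κ : ℝ → ℝ)
    (hu : ∀ s, HasDerivAt u (-(κ s * v s)) s)
    (hv : ∀ s, HasDerivAt v (κ s * u s - 1) s)
    (hκ : ∀ s, l ≤ κ s) (hu0 : ∀ s, 0 ≤ u s) (t₀ : ℝ)
    (h : (1/l)^2 < (u t₀ - 1/l)^2 + (v t₀)^2) :
    ∃ t, t₀ < t ∧ (u t - 1/l)^2 + (v t)^2 ≤ (1/l)^2 := by
  by_contra hA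
  push_neg at hA
  have hP : ∀ t, t₀ ≤ t → 2 * u t < l * (u t ^ 2 + v t ^ 2) := by
    intro t ht
    have hgt : (1/l)^2 < (u t - 1/l)^2 + (v t)^2 := by
      rcases eq_or_lt_of_le ht with rfl | ht'
      · exact h
      · exact hA t ht'
    have hexp : (u t - 1/l)^2 + v t^2 - (1/l)^2 = u t^2 + v t^2 - 2*u t/l := by ring
    have h1 : 0 < u t^2 + v t^2 - 2*u t/l := by linarith
    have h2 := mul_pos hl h1
    have e1 : l * (u t^2 + v t^2 - 2*u t/l) = l * (u t^2 + v t^2) - 2 * u t := by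
      field_simp
    linarith
  have hSpos : ∀ t, t₀ ≤ t → 0 < u t ^ 2 + v t ^ 2 := by
    intro t ht
    have h1 := hP t ht
    have h2 : 0 < l * (u t ^ 2 + v t ^ 2) := by linarith [hu0 t]
    rcases mul_pos_iff.mp h2 with ⟨_, h⟩ | ⟨h, _⟩
    · exact h
    · linarith
  have hpos : ∀ t, t₀ ≤ t → 0 < Real.sqrt (u t ^ 2 + v t ^ 2) + u t := by
    intro t ht
    have := Real.sqrt_pos.2 (hSpos t ht)
    have := hu0 t
    linarith
  set φ : ℝ → ℝ := fun s => 2 * Real.arctan (v s / (Real.sqrt (u s ^ 2 + v s ^ 2) + u s))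
    with hφdef
  have hφd : ∀ t, t₀ ≤ t → HasDerivAt φ
      ((u t * (κ t * u t - 1) - v t * (-(κ t * v t))) / (u t ^ 2 + v t ^ 2)) t := by
    intro t ht
    exact ang_hasDerivAt u v (-(κ t * v t)) (κ t * u t - 1) t (hu t) (hv t) (hpos t ht)
  have hφlb : ∀ t, t₀ ≤ t →
      l / 2 ≤ (u t * (κ t * u t - 1) - v t * (-(κ t * v t))) / (u t ^ 2 + v t ^ 2) := by
    intro t ht
    rw [le_div_iff₀ (hSpos t ht)]
    have h1 := hP t ht
    have h2 := hκ t
    have h3 := hu0 t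
    nlinarith [mul_nonneg (sub_nonneg.2 h2) (hSpos t ht).le]
  set T := t₀ + 4 * Real.pi / l with hTdef
  have hT : t₀ < T := by
    have := Real.pi_pos
    rw [hTdef]
    have h4 : 0 < 4 * Real.pi / l := div_pos (by positivity) hl
    linarith
  have hcont : ContinuousOn φ (Set.Icc t₀ T) := by
    intro t ht
    exact ((hφd t ht.1).continuousAt).continuousWithinAt
  obtain ⟨ξ, hξ, hslope⟩ := exists_hasDerivAt_eq_slope φ
    (fun t => (u t * (κ t * u t - 1) - v t * (-(κ t * v t))) / (u t ^ 2 + v t ^ 2))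
    hT hcont (fun t ht => hφd t ht.1.le)
  have hb1 : φ T ∈ Set.Ioo (-Real.pi) Real.pi := ang_mem (u T) (v T)
  have hb2 : φ t₀ ∈ Set.Ioo (-Real.pi) Real.pi := ang_mem (u t₀) (v t₀)
  clear_value φ T
  have hlb := hφlb ξ hξ.1.le
  rw [hslope] at hlb
  rw [div_le_div_iff₀ (by norm_num : (0:ℝ) < 2) (by linarith : (0:ℝ) < T - t₀)] at hlb
  have hTt : T - t₀ = 4 * Real.pi / l := by rw [hTdef]; ring
  rw [hTt] at hlb
  have hll : l * (4 * Real.pi / l) = 4 * Real.pi := by field_simp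
  rw [hll] at hlb
  obtain ⟨hb1a, hb1b⟩ := hb1
  obtain ⟨hb2a, hb2b⟩ := hb2
  linarith

lemma e1_aux (l κ u v : ℝ) (hl : l ≠ 0) :
    (u - 1/l) * (κ * u - 1) - v * (-(κ * v)) - l * ((u - 1/l) ^ 2 + v ^ 2)
      = (κ - l) * (((u - 1/l) ^ 2 + v ^ 2) + (u - 1/l)/l) := by
  field_simp
  ring

set_option maxHeartbeats 2000000 in
lemma key_ode (l : ℝ) (hl : 0 < l) (u v κ : ℝ → ℝ)
    (hu : ∀ s, HasDerivAt u (-(κ s * v s)) s)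
    (hv : ∀ s, HasDerivAt v (κ s * u s - 1) s)
    (hκ : ∀ s, l ≤ κ s) (hu0 : ∀ s, 0 ≤ u s) (t₀ : ℝ) :
    (u t₀ - 1/l)^2 + (v t₀)^2 ≤ (1/l)^2 := by
  by_contra hcon
  push_neg at hcon
  -- forward escape
  obtain ⟨t₂', ht₂'gt, ht₂'le⟩ := escape_forward l hl u v κ hu hv hκ hu0 t₀ hcon
  -- backward escape via time reversal
  have hurev : ∀ s, HasDerivAt (fun s => u (-s)) (-((κ (-s)) * (-(v (-s))))) s := by
    intro s
    have := (hu (-s)).comp s (hasDerivAt_neg s)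
    refine this.congr_deriv (Eq.symm ?_)
    ring
  have hvrev : ∀ s, HasDerivAt (fun s => -(v (-s))) ((κ (-s)) * (u (-s)) - 1) s := by
    intro s
    have := ((hv (-s)).comp s (hasDerivAt_neg s)).neg
    refine this.congr_deriv (Eq.symm ?_)
    ring
  obtain ⟨t₁'', ht₁''gt, ht₁''le⟩ := escape_forward l hl (fun s => u (-s)) (fun s => -(v (-s)))
    (fun s => κ (-s)) hurev hvrev (fun s => hκ (-s)) (fun s => hu0 (-s)) (-t₀)
    (by simpa using hcon)
  set t₁' := -t₁'' with ht₁'def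
  have ht₁'lt : t₁' < t₀ := by rw [ht₁'def]; linarith
  have ht₁'le : (u t₁' - 1/l)^2 + (v t₁')^2 ≤ (1/l)^2 := by
    have := ht₁''le
    simpa [ht₁'def] using this
  clear_value t₁'
  -- P and its derivative
  set P : ℝ → ℝ := fun s => (u s - 1/l)^2 + (v s)^2 with hPdef
  have hPd : ∀ s, HasDerivAt P (2 / l * (v s * (κ s - l))) s := by
    intro s
    have h1 := ((hu s).sub_const (1/l)).pow 2
    have h2 := (hv s).pow 2
    have := h1.add h2
    refine this.congr_deriv (Eq.symm ?_)
    norm_num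
    field_simp
    ring
  have hPval : ∀ s, P s = (u s - 1/l)^2 + (v s)^2 := fun s => rfl
  have hPt₀ : (1/l)^2 < P t₀ := hcon
  have hPt₂' : P t₂' ≤ (1/l)^2 := ht₂'le
  have hPt₁' : P t₁' ≤ (1/l)^2 := ht₁'le
  have hPc : Continuous P := by
    have hud : Differentiable ℝ u := fun s => (hu s).differentiableAt
    have hvd : Differentiable ℝ v := fun s => (hv s).differentiableAt
    exact (((hud.sub_const _).pow _).add (hvd.pow _)).continuous
  clear_value P
  -- t₂ := sInf A, t₁ := sSup B
  set A : Set ℝ := {t | t₀ ≤ t ∧ P t ≤ (1/l)^2} with hAdef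
  have hAne : A.Nonempty := ⟨t₂', ht₂'gt.le, hPt₂'⟩
  have hAclosed : IsClosed A := by
    have : A = Set.Ici t₀ ∩ P ⁻¹' Set.Iic ((1/l)^2) := rfl
    rw [this]
    exact isClosed_Ici.inter (isClosed_Iic.preimage hPc)
  have hAbdd : BddBelow A := ⟨t₀, fun t ht => ht.1⟩
  set t₂ := sInf A with ht₂def
  have ht₂mem : t₂ ∈ A := hAclosed.csInf_mem hAne hAbdd
  have ht₂gt : t₀ < t₂ := by
    rcases eq_or_lt_of_le ht₂mem.1 with h | h
    · exfalso; have := ht₂mem.2; rw [← h] at this; exact absurd this (not_le.2 hPt₀)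
    · exact h
  set B : Set ℝ := {t | t ≤ t₀ ∧ P t ≤ (1/l)^2} with hBdef
  have hBne : B.Nonempty := ⟨t₁', ht₁'lt.le, hPt₁'⟩
  have hBclosed : IsClosed B := by
    have : B = Set.Iic t₀ ∩ P ⁻¹' Set.Iic ((1/l)^2) := rfl
    rw [this]
    exact isClosed_Iic.inter (isClosed_Iic.preimage hPc)
  have hBbdd : BddAbove B := ⟨t₀, fun t ht => ht.1⟩
  set t₁ := sSup B with ht₁def
  have ht₁mem : t₁ ∈ B := hBclosed.csSup_mem hBne hBbdd
  have ht₁lt : t₁ < t₀ := by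
    rcases eq_or_lt_of_le ht₁mem.1 with h | h
    · exfalso; have := ht₁mem.2; rw [h] at this; exact absurd this (not_le.2 hPt₀)
    · exact h
  -- on the open interval (t₁, t₂), P > (1/l)^2
  have hPmid : ∀ s, t₁ < s → s < t₂ → (1/l)^2 < P s := by
    intro s hs1 hs2
    rcases le_or_gt s t₀ with h | h
    · rcases eq_or_lt_of_le h with rfl | h'
      · exact hPt₀
      · by_contra hc
        push_neg at hc
        have : s ∈ B := ⟨h, hc⟩
        have := le_csSup hBbdd this
        linarith
    · by_contra hc
      push_neg at hc
      have : s ∈ A := ⟨h.le, hc⟩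
      have := csInf_le hAbdd this
      linarith
  clear_value t₁ t₂
  -- MVT to find points with v > 0 and v < 0
  have hPcont : ∀ a b : ℝ, ContinuousOn P (Set.Icc a b) := fun a b => hPc.continuousOn
  obtain ⟨ξ, hξ, hξslope⟩ := exists_hasDerivAt_eq_slope P (fun s => 2 / l * (v s * (κ s - l)))
    ht₁lt (hPcont _ _) (fun s _ => hPd s)
  have hvξ : 0 < v ξ := by
    have hnum : 0 < P t₀ - P t₁ := by
      have := ht₁mem.2
      linarith
    have hden : 0 < t₀ - t₁ := by linarith
    have hsl : 0 < 2 / l * (v ξ * (κ ξ - l)) := by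
      rw [hξslope]
      exact div_pos hnum hden
    have h2l : 0 < 2 / l := by positivity
    have hX : 0 < v ξ * (κ ξ - l) := by
      rcases mul_pos_iff.mp hsl with ⟨_, h⟩ | ⟨h, _⟩
      · exact h
      · linarith
    have h1 : 0 ≤ κ ξ - l := by linarith [hκ ξ]
    by_contra hc
    push_neg at hc
    nlinarith [mul_nonneg (neg_nonneg.2 hc) h1]
  obtain ⟨ξ', hξ', hξ'slope⟩ := exists_hasDerivAt_eq_slope P (fun s => 2 / l * (v s * (κ s - l)))
    ht₂gt (hPcont _ _) (fun s _ => hPd s)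
  have hvξ' : v ξ' < 0 := by
    have hnum : P t₂ - P t₀ < 0 := by
      have := ht₂mem.2
      linarith
    have hden : 0 < t₂ - t₀ := by linarith
    have hsl : 2 / l * (v ξ' * (κ ξ' - l)) < 0 := by
      rw [hξ'slope]
      exact div_neg_of_neg_of_pos hnum hden
    have h2l : 0 < 2 / l := by positivity
    have hX : v ξ' * (κ ξ' - l) < 0 := by
      rcases mul_neg_iff.mp hsl with ⟨_, h⟩ | ⟨h, _⟩
      · exact h
      · linarith
    have h1 : 0 ≤ κ ξ' - l := by linarith [hκ ξ']
    by_contra hc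
    push_neg at hc
    nlinarith [mul_nonneg hc h1]
  -- angle function around (1/l, 0)
  have hmid' : ∀ s, t₁ < s → s < t₂ → (0 : ℝ) <
      Real.sqrt ((u s - 1/l) ^ 2 + v s ^ 2) + (u s - 1/l) := by
    intro s hs1 hs2
    have hPs := hPmid s hs1 hs2
    rw [hPval s] at hPs
    have hsq : 1/l < Real.sqrt ((u s - 1/l) ^ 2 + v s ^ 2) := by
      have h0 : (0:ℝ) ≤ 1/l := by positivity
      have := Real.sqrt_lt_sqrt (by positivity) hPs
      rwa [Real.sqrt_sq h0] at this
    have := hu0 s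
    linarith
  have hθlb : ∀ s, t₁ < s → s < t₂ → (0:ℝ) <
      ((u s - 1/l) * (κ s * u s - 1) - v s * (-(κ s * v s))) / ((u s - 1/l) ^ 2 + v s ^ 2) := by
    intro s hs1 hs2
    have hPs := hPmid s hs1 hs2
    rw [hPval s] at hPs
    have hS : 0 < (u s - 1/l) ^ 2 + v s ^ 2 := by
      have : (0:ℝ) < (1/l)^2 := by positivity
      linarith
    rw [lt_div_iff₀ hS]
    have h2 := hκ s
    have h3 := hu0 s
    have hp : -(1/l) ≤ u s - 1/l := by linarith
    have e1 : (u s - 1/l) * (κ s * u s - 1) - v s * (-(κ s * v s))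
        - l * ((u s - 1/l) ^ 2 + v s ^ 2)
        = (κ s - l) * (((u s - 1/l) ^ 2 + v s ^ 2) + (u s - 1/l)/l) :=
      e1_aux l (κ s) (u s) (v s) (ne_of_gt hl)
    have e2 : -((1/l)^2) ≤ (u s - 1/l)/l := by
      have h4 := (div_le_div_iff_of_pos_right hl).2 hp
      rw [show (-(1/l))/l = -((1/l)^2) from by ring] at h4
      exact h4
    have hSp : (0:ℝ) ≤ ((u s - 1/l) ^ 2 + v s ^ 2) + (u s - 1/l)/l := by
      have : (0:ℝ) < (1/l)^2 := by positivity
      linarith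
    have hnum : l * ((u s - 1/l) ^ 2 + v s ^ 2) ≤
        (u s - 1/l) * (κ s * u s - 1) - v s * (-(κ s * v s)) := by
      linarith [e1, mul_nonneg (sub_nonneg.2 h2) hSp]
    rw [zero_mul]
    linarith [mul_pos hl hS]
  set θ : ℝ → ℝ := fun s =>
      2 * Real.arctan (v s / (Real.sqrt ((u s - 1/l) ^ 2 + v s ^ 2) + (u s - 1/l))) with hθdef
  have hθd : ∀ s, t₁ < s → s < t₂ → HasDerivAt θ
      (((u s - 1/l) * (κ s * u s - 1) - v s * (-(κ s * v s))) / ((u s - 1/l) ^ 2 + v s ^ 2)) s := by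
    intro s hs1 hs2
    exact ang_hasDerivAt (fun s => u s - 1/l) v (-(κ s * v s)) (κ s * u s - 1) s
      ((hu s).sub_const _) (hv s) (hmid' s hs1 hs2)
  -- θ is increasing on (t₁,t₂): compare θ ξ (with v ξ > 0) and θ ξ' (with v ξ' < 0)
  have hξin : t₁ < ξ ∧ ξ < t₂ := ⟨hξ.1, lt_trans hξ.2 ht₂gt⟩
  have hξ'in : t₁ < ξ' ∧ ξ' < t₂ := ⟨lt_trans ht₁lt hξ'.1, hξ'.2⟩
  have hξξ' : ξ < ξ' := lt_trans hξ.2 hξ'.1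
  obtain ⟨ζ, hζ, hζslope⟩ := exists_hasDerivAt_eq_slope θ
    (fun s => ((u s - 1/l) * (κ s * u s - 1) - v s * (-(κ s * v s))) / ((u s - 1/l) ^ 2 + v s ^ 2))
    hξξ' (fun t ht => (hθd t (lt_of_lt_of_le hξin.1 ht.1) (lt_of_le_of_lt ht.2 hξ'in.2)).continuousAt.continuousWithinAt)
    (fun s hs => hθd s (lt_trans hξin.1 hs.1) (lt_trans hs.2 hξ'in.2))
  have hζpos : 0 < ((u ζ - 1/l) * (κ ζ * u ζ - 1) - v ζ * (-(κ ζ * v ζ))) / ((u ζ - 1/l) ^ 2 + v ζ ^ 2) :=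
    hθlb ζ (lt_trans hξin.1 hζ.1) (lt_trans hζ.2 hξ'in.2)
  rw [hζslope] at hζpos
  have hθξpos : 0 < θ ξ := ang_pos _ _ (hmid' ξ hξin.1 hξin.2) hvξ
  have hθξ'neg : θ ξ' < 0 := ang_neg _ _ (hmid' ξ' hξ'in.1 hξ'in.2) hvξ'
  clear_value θ
  have hden : 0 < ξ' - ξ := by linarith
  rw [div_pos_iff] at hζpos
  rcases hζpos with ⟨h1, h2⟩ | ⟨h1, h2⟩
  · linarith
  · linarith


set_option maxHeartbeats 1000000 in
/-- Blaschke's Rolling Theorem, part A, plane version with explicit boundary curve: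
if the frontier of a compact convex plane set `D` is traced by a unit-speed C² curve
`γ` with inner unit normal `N` and curvature `⟪γ''(s), N(s)⟫ ≥ l > 0`, then `D` is
contained in the closed disc of radius `1/l` centered at `γ(s) + (1/l)·N(s)`. -/
theorem blaschke_rolling_A_plane
    (D : Set (EuclideanSpace ℝ (Fin 2)))
    (hDcompact : IsCompact D) (hDconv : Convex ℝ D) (hDint : (interior D).Nonempty)
    (γ N : ℝ → EuclideanSpace ℝ (Fin 2))
    (hγ : ContDiff ℝ 2 γ) (hγD : frontier D = Set.range γ)
    (hunit : ∀ s, ‖deriv γ s‖ = 1)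
    (hNunit : ∀ s, ‖N s‖ = 1)
    (hNorth : ∀ s, ⟪deriv γ s, N s⟫ = 0)
    (hNinner : ∀ s, ∀ x ∈ D, 0 ≤ ⟪x - γ s, N s⟫)
    (l : ℝ) (hl : 0 < l)
    (hcurv : ∀ s, l ≤ ⟪deriv (deriv γ) s, N s⟫) :
    ∀ s : ℝ, D ⊆ Metric.closedBall (γ s + (1 / l) • N s) (1 / l) := by
  -- differentiability bookkeeping
  rw [show (2 : WithTop ℕ∞) = 1 + 1 from by norm_num] at hγ
  have hd1 : Differentiable ℝ γ := hγ.differentiable (by norm_num)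
  have hγ'C1 : ContDiff ℝ 1 (deriv γ) := ((contDiff_succ_iff_deriv).mp hγ).2.2
  have hd2 : Differentiable ℝ (deriv γ) := hγ'C1.differentiable (by norm_num)
  have hc2 : Continuous (deriv (deriv γ)) := hγ'C1.continuous_deriv le_rfl
  have hγd : ∀ s, HasDerivAt γ (deriv γ s) s := fun s => (hd1 s).hasDerivAt
  have hγ'd : ∀ s, HasDerivAt (deriv γ) (deriv (deriv γ) s) s := fun s => (hd2 s).hasDerivAt
  -- the tangent is a unit vector
  have hone : ∀ s, ⟪deriv γ s, deriv γ s⟫ = (1:ℝ) := by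
    intro s
    rw [real_inner_self_eq_norm_sq, hunit]
    norm_num
  -- γ'' ⊥ γ'
  have horth2 : ∀ s, ⟪deriv γ s, deriv (deriv γ) s⟫ = 0 := by
    intro s
    have hD := HasDerivAt.inner ℝ (hγ'd s) (hγ'd s)
    have hconst : (fun t : ℝ => ⟪deriv γ t, deriv γ t⟫) = fun _ => (1:ℝ) := funext hone
    rw [hconst] at hD
    have h0 := hD.unique (hasDerivAt_const s 1)
    have hcomm : ⟪deriv (deriv γ) s, deriv γ s⟫ = ⟪deriv γ s, deriv (deriv γ) s⟫ :=
      real_inner_comm _ _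
    linarith [h0, hcomm.symm.le]
  -- decompositions along Jrot of the tangent
  have hdecomp : ∀ s, deriv (deriv γ) s
      = ⟪deriv (deriv γ) s, Jrot (deriv γ s)⟫ • Jrot (deriv γ s) :=
    fun s => perp_decomp (deriv γ s) (deriv (deriv γ) s) (hone s) (horth2 s)
  have hNdec : ∀ s, N s = ⟪N s, Jrot (deriv γ s)⟫ • Jrot (deriv γ s) :=
    fun s => perp_decomp (deriv γ s) (N s) (hone s) (hNorth s)
  set δ : ℝ → ℝ := fun s => ⟪N s, Jrot (deriv γ s)⟫ with hδdef
  set κt : ℝ → ℝ := fun s => ⟪deriv (deriv γ) s, Jrot (deriv γ s)⟫ with hκtdef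
  have hδsq : ∀ s, δ s ^ 2 = 1 := by
    intro s
    have hNN : ⟪N s, N s⟫ = (1:ℝ) := by
      rw [real_inner_self_eq_norm_sq, hNunit]; norm_num
    have hJJ : ⟪Jrot (deriv γ s), Jrot (deriv γ s)⟫ = (1:ℝ) := by
      rw [Jrot_inner]; exact hone s
    have h2 : ⟪N s, N s⟫ = δ s ^ 2 * ⟪Jrot (deriv γ s), Jrot (deriv γ s)⟫ := by
      conv_lhs => rw [hNdec s]
      rw [real_inner_smul_left, real_inner_smul_right]
      ring
    rw [hNN, hJJ] at h2
    linarith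
  have hκδ : ∀ s, ⟪deriv (deriv γ) s, N s⟫ = δ s * κt s := by
    intro s
    conv_lhs => rw [hNdec s]
    rw [real_inner_smul_right]
  have hκl : ∀ s, l ≤ δ s * κt s := fun s => (hκδ s) ▸ hcurv s
  have hκtcont : Continuous κt := by
    apply Continuous.inner hc2
    exact Jrot.continuous.comp hγ'C1.continuous
  have hκtne : ∀ s, κt s ≠ 0 := by
    intro s h0
    have := hκl s
    rw [h0, mul_zero] at this
    linarith
  have hsign : ∀ a b : ℝ, κt a < 0 → 0 < κt b → False := by
    intro a b h1 h2
    rcases le_total a b with hab | hab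
    · obtain ⟨c, _, hc⟩ := intermediate_value_Icc hab hκtcont.continuousOn
        (Set.mem_Icc.2 ⟨h1.le, h2.le⟩)
      exact hκtne c hc
    · obtain ⟨c, _, hc⟩ := intermediate_value_Icc' hab hκtcont.continuousOn
        (Set.mem_Icc.2 ⟨h1.le, h2.le⟩)
      exact hκtne c hc
  have hδpm : ∀ s, δ s = 1 ∨ δ s = -1 := by
    intro s
    have h := hδsq s
    have : (δ s - 1) * (δ s + 1) = 0 := by nlinarith
    rcases mul_eq_zero.mp this with h | h
    · left; linarith
    · right; linarith
  have hδκsign : ∀ s, (δ s = 1 → 0 < κt s) ∧ (δ s = -1 → κt s < 0) := by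
    intro s
    constructor
    · intro h1
      have := hκl s
      rw [h1, one_mul] at this
      linarith
    · intro h1
      have := hκl s
      rw [h1] at this
      nlinarith
  set e : ℝ := δ 0 with hedef
  have he : ∀ s, δ s = e := by
    intro s
    rw [hedef]
    rcases hδpm s with h1 | h1 <;> rcases hδpm 0 with h2 | h2
    · rw [h1, h2]
    · exact absurd ((hδκsign 0).2 h2) (fun h => hsign 0 s h ((hδκsign s).1 h1))
    · exact absurd ((hδκsign s).2 h1) (fun h => hsign s 0 h ((hδκsign 0).1 h2))
    · rw [h1, h2]
  have hesq : e * e = 1 := by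
    have := hδsq 0
    rw [hedef]
    nlinarith
  -- main argument
  intro s₀ x hx
  set uu : ℝ → ℝ := fun s => ⟪x - γ s, N s⟫ with huudef
  set vv : ℝ → ℝ := fun s => ⟪x - γ s, deriv γ s⟫ with hvvdef
  set κκ : ℝ → ℝ := fun s => e * κt s with hκκdef
  have hκκl : ∀ s, l ≤ κκ s := by
    intro s
    have h1 := hκl s
    rw [he s] at h1
    exact h1
  have hu0 : ∀ s, 0 ≤ uu s := fun s => hNinner s x hx
  have hxg : ∀ s, HasDerivAt (fun s => x - γ s) (-(deriv γ s)) s := by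
    intro s
    have := (hasDerivAt_const s x).sub (hγd s)
    refine this.congr_deriv (Eq.symm ?_)
    exact (zero_sub _).symm
  have hJd : ∀ s, HasDerivAt (fun s => Jrot (deriv γ s)) (Jrot (deriv (deriv γ) s)) s :=
    fun s => Jrot.hasFDerivAt.comp_hasDerivAt s (hγ'd s)
  have huN : ∀ s, uu s = e * ⟪x - γ s, Jrot (deriv γ s)⟫ := by
    intro s
    show ⟪x - γ s, N s⟫ = _
    conv_lhs => rw [hNdec s]
    rw [real_inner_smul_right, show ⟪N s, Jrot (deriv γ s)⟫ = e from he s]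
  have huder : ∀ s, HasDerivAt uu (-(κκ s * vv s)) s := by
    intro s
    have htu := HasDerivAt.inner ℝ (hxg s) (hJd s)
    have hval : ⟪x - γ s, Jrot (deriv (deriv γ) s)⟫ + ⟪-(deriv γ s), Jrot (deriv γ s)⟫
        = -(κt s * vv s) := by
      have h1 : Jrot (deriv (deriv γ) s) = κt s • Jrot (Jrot (deriv γ s)) := by
        conv_lhs => rw [hdecomp s]
        rw [map_smul]
      rw [h1, Jrot_Jrot, real_inner_smul_right, inner_neg_left, inner_neg_right, Jrot_orth]
      simp only [hvvdef]
      ring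
    rw [hval] at htu
    have hueq : uu = fun s => e * ⟪x - γ s, Jrot (deriv γ s)⟫ := funext huN
    rw [hueq]
    have := htu.const_mul e
    refine this.congr_deriv (Eq.symm ?_)
    simp only [hκκdef]
    ring
  have hvder : ∀ s, HasDerivAt vv (κκ s * uu s - 1) s := by
    intro s
    have hv := HasDerivAt.inner ℝ (hxg s) (hγ'd s)
    have hval : ⟪x - γ s, deriv (deriv γ) s⟫ + ⟪-(deriv γ s), deriv γ s⟫
        = κκ s * uu s - 1 := by
      have h1 : ⟪x - γ s, deriv (deriv γ) s⟫ = κt s * ⟪x - γ s, Jrot (deriv γ s)⟫ := by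
        conv_lhs => rw [hdecomp s]
        rw [real_inner_smul_right]
      have h2 : e * uu s = ⟪x - γ s, Jrot (deriv γ s)⟫ := by
        rw [huN s, ← mul_assoc, hesq, one_mul]
      rw [h1, ← h2, inner_neg_left, hone s]
      simp only [hκκdef]
      ring
    rw [hval] at hv
    exact hv
  have hkey := key_ode l hl uu vv κκ huder hvder hκκl hu0 s₀
  -- convert to the ball statement
  rw [Metric.mem_closedBall, dist_eq_norm]
  have hxc : x - (γ s₀ + (1 / l) • N s₀) = (x - γ s₀) - (1 / l) • N s₀ := by abel
  have hnormsq : ‖x - (γ s₀ + (1 / l) • N s₀)‖ ^ 2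
      = (uu s₀ - 1/l)^2 + (vv s₀)^2 := by
    rw [hxc, norm_sub_sq_real]
    have h1 : ⟪x - γ s₀, (1 / l) • N s₀⟫ = (1/l) * uu s₀ := by
      rw [real_inner_smul_right]
    have h2 : ‖(1 / l) • N s₀‖ = 1/l := by
      rw [norm_smul, hNunit, Real.norm_eq_abs, abs_of_pos (by positivity : (0:ℝ) < 1/l)]
      ring
    have h3 : ‖x - γ s₀‖ ^ 2 = (vv s₀)^2 + (uu s₀)^2 := by
      rw [pyth_two (deriv γ s₀) (x - γ s₀) (hone s₀)]
      have h4 : ⟪x - γ s₀, Jrot (deriv γ s₀)⟫ ^ 2 = (uu s₀)^2 := by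
        have h5 := huN s₀
        linear_combination (-(uu s₀ + e * ⟪x - γ s₀, Jrot (deriv γ s₀)⟫)) * h5
          - ⟪x - γ s₀, Jrot (deriv γ s₀)⟫^2 * hesq
      rw [h4]
    rw [h1, h2, h3]
    ring
  have hfin : ‖x - (γ s₀ + (1 / l) • N s₀)‖ ^ 2 ≤ (1/l)^2 := by
    rw [hnormsq]; exact hkey
  have hnn : 0 ≤ ‖x - (γ s₀ + (1 / l) • N s₀)‖ := norm_nonneg _
  have hlinv : (0:ℝ) ≤ 1/l := by positivity
  nlinarith [hfin, hnn, hlinv]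
end

section
/- (Blaschke's Rolling Theorem, part B, plane version with explicit boundary curve.) Let D ⊆ ℝ² be a compact convex set with nonempty interior whose frontier is the image of a twice continuously differentiable curve γ : ℝ → ℝ² with ‖γ'(s)‖ = 1 for all s, and let N : ℝ → ℝ² satisfy, for every s: ‖N(s)‖ = 1, ⟨γ'(s), N(s)⟩ = 0, and ⟨x − γ(s), N(s)⟩ ≥ 0 for all x ∈ D (so N is the inner unit normal along γ). Suppose λ > 0 and the signed curvature with respect to N satisfies 0 < ⟨γ''(s), N(s)⟩ ≤ λ for all s. Then for every s, the closed ball of radius 1/λ centered at γ(s) + (1/λ)·N(s) is contained in D. -/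
open scoped RealInnerProductSpace

open scoped RealInnerProductSpace

lemma e2_inner (v w : EuclideanSpace ℝ (Fin 2)) : ⟪v, w⟫ = v 0 * w 0 + v 1 * w 1 := by
  simp [PiLp.inner_apply, RCLike.inner_apply, Fin.sum_univ_two, mul_comm]

lemma planar_parseval (a b c d : ℝ) (h1 : a^2+b^2 = 1) (h2 : c^2+d^2 = 1)
    (h3 : a*c+b*d = 0) (p q r s : ℝ) :
    (p*a+q*b)*(r*a+s*b) + (p*c+q*d)*(r*c+s*d) = p*r + q*s := by
  have ht2 : (a*d - b*c)^2 = 1 := by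
    linear_combination (c^2+d^2)*h1 + h2 - (a*c+b*d)*h3
  have hd : d = a*(a*d-b*c) := by linear_combination b*h3 - d*h1
  have hb : b = -(c*(a*d-b*c)) := by linear_combination d*h3 - b*h2
  set t := a*d - b*c with htdef
  have E4 : a^2+c^2 = 1 := by
    have h1' := h1
    rw [hb] at h1'
    linear_combination h1' - c^2*ht2
  have E5 : b^2+d^2 = 1 := by
    rw [hb, hd]
    linear_combination (a^2+c^2)*ht2 + E4
  have E6 : a*b+c*d = 0 := by rw [hb, hd]; ring
  linear_combination p*r*E4 + q*s*E5 + (p*s+q*r)*E6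

lemma planar_inner {T Nv : EuclideanSpace ℝ (Fin 2)} (hT : ‖T‖ = 1) (hN : ‖Nv‖ = 1)
    (hTN : ⟪T, Nv⟫ = 0) (v w : EuclideanSpace ℝ (Fin 2)) :
    ⟪v, w⟫ = ⟪v, T⟫ * ⟪w, T⟫ + ⟪v, Nv⟫ * ⟪w, Nv⟫ := by
  have h1 : T 0^2 + T 1^2 = 1 := by
    have := real_inner_self_eq_norm_sq T
    rw [hT, e2_inner] at this; nlinarith [this]
  have h2 : Nv 0^2 + Nv 1^2 = 1 := by
    have := real_inner_self_eq_norm_sq Nv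
    rw [hN, e2_inner] at this; nlinarith [this]
  have h3 : T 0 * Nv 0 + T 1 * Nv 1 = 0 := by rw [e2_inner] at hTN; linarith
  have key := planar_parseval (T 0) (T 1) (Nv 0) (Nv 1) h1 h2 h3 (v 0) (v 1) (w 0) (w 1)
  rw [e2_inner v w, e2_inner v T, e2_inner w T, e2_inner v Nv, e2_inner w Nv]
  linarith [key]

lemma planar_decomp {T Nv : EuclideanSpace ℝ (Fin 2)} (hT : ‖T‖ = 1) (hN : ‖Nv‖ = 1)
    (hTN : ⟪T, Nv⟫ = 0) (v : EuclideanSpace ℝ (Fin 2)) :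
    v = ⟪v, T⟫ • T + ⟪v, Nv⟫ • Nv := by
  have h1 : T 0^2 + T 1^2 = 1 := by
    have := real_inner_self_eq_norm_sq T
    rw [hT, e2_inner] at this; nlinarith [this]
  have h2 : Nv 0^2 + Nv 1^2 = 1 := by
    have := real_inner_self_eq_norm_sq Nv
    rw [hN, e2_inner] at this; nlinarith [this]
  have h3 : T 0 * Nv 0 + T 1 * Nv 1 = 0 := by rw [e2_inner] at hTN; linarith
  ext i
  have happ : ∀ (a : EuclideanSpace ℝ (Fin 2)) j, (⟪v,T⟫ • T + ⟪v,Nv⟫ • Nv) j = ⟪v,T⟫ * T j + ⟪v,Nv⟫ * Nv j := by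
    intro a j; simp [PiLp.add_apply, PiLp.smul_apply, smul_eq_mul]
  rw [happ v i]
  fin_cases i
  · have key := planar_parseval (T 0) (T 1) (Nv 0) (Nv 1) h1 h2 h3 (v 0) (v 1) 1 0
    rw [e2_inner v T, e2_inner v Nv]
    simpa using key.symm
  · have key := planar_parseval (T 0) (T 1) (Nv 0) (Nv 1) h1 h2 h3 (v 0) (v 1) 0 1
    rw [e2_inner v T, e2_inner v Nv]
    simpa using key.symm

lemma const_of_cont_sq_one {f : ℝ → ℝ} (hf : Continuous f) (h2 : ∀ t, f t ^ 2 = 1)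
    {t₀ : ℝ} (h0 : f t₀ = 1) : ∀ t, f t = 1 := by
  intro t
  by_contra hne
  have hft : f t = -1 := by
    have : (f t - 1) * (f t + 1) = 0 := by linear_combination h2 t
    rcases mul_eq_zero.mp this with h | h
    · exact absurd (by linarith) hne
    · linarith
  -- IVT: f takes value 0 between t and t₀, contradiction with f^2 = 1
  rcases le_total t t₀ with h | h
  · obtain ⟨c, _, hc⟩ := intermediate_value_Icc h hf.continuousOn (by rw [hft, h0]; constructor <;> norm_num : (0:ℝ) ∈ Set.Icc (f t) (f t₀))
    have := h2 c; rw [hc] at this; norm_num at this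
  · obtain ⟨c, _, hc⟩ := intermediate_value_Icc' h hf.continuousOn (by rw [hft, h0]; constructor <;> norm_num : (0:ℝ) ∈ Set.Icc (f t) (f t₀))
    have := h2 c; rw [hc] at this; norm_num at this

lemma mem_of_inner_nonneg
    (D : Set (EuclideanSpace ℝ (Fin 2)))
    (hDcompact : IsCompact D) (hDconv : Convex ℝ D) (hDint : (interior D).Nonempty)
    (γ N : ℝ → EuclideanSpace ℝ (Fin 2))
    (hγ : ContDiff ℝ 2 γ) (hγD : frontier D = Set.range γ)
    (hunit : ∀ s, ‖deriv γ s‖ = 1)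
    (hNunit : ∀ s, ‖N s‖ = 1)
    (hNorth : ∀ s, ⟪deriv γ s, N s⟫ = 0)
    (hNinner : ∀ s, ∀ x ∈ D, 0 ≤ ⟪x - γ s, N s⟫)
    (x : EuclideanSpace ℝ (Fin 2)) (hx : ∀ t, 0 ≤ ⟪x - γ t, N t⟫) : x ∈ D := by
  by_contra hxD
  have hDclosed : IsClosed D := hDcompact.isClosed
  have hDne : D.Nonempty := hDint.mono interior_subset
  obtain ⟨y, hyD, hyd⟩ := hDcompact.exists_infDist_eq_dist hDne x
  have hxy : x ≠ y := fun h => hxD (h ▸ hyD)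
  have hfrD : frontier D = D \ interior D := by
    rw [frontier, hDclosed.closure_eq]
  -- y is on the frontier
  have hyfr : y ∈ frontier D := by
    rw [hfrD]
    refine ⟨hyD, fun hyint => ?_⟩
    obtain ⟨ε, hε, hball⟩ := Metric.isOpen_iff.mp isOpen_interior y hyint
    set u := x - y with hu
    have hune : u ≠ 0 := sub_ne_zero.mpr hxy
    have hunorm : 0 < ‖u‖ := norm_pos_iff.mpr hune
    set δ : ℝ := min (ε/2) ‖u‖ with hδdef
    have hδpos : 0 < δ := lt_min (by linarith) hunorm
    have hδle : δ ≤ ‖u‖ := min_le_right _ _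
    set y' := y + (δ/‖u‖) • u with hy'
    have hy'D : y' ∈ D := by
      apply interior_subset
      apply hball
      rw [Metric.mem_ball, dist_eq_norm]
      have : y' - y = (δ/‖u‖) • u := by rw [hy']; abel
      rw [this, norm_smul]
      rw [Real.norm_eq_abs, abs_of_pos (by positivity)]
      rw [div_mul_cancel₀ _ (ne_of_gt hunorm)]
      calc δ ≤ ε/2 := min_le_left _ _
        _ < ε := by linarith
    have hdist : dist x y' = ‖u‖ - δ := by
      rw [dist_eq_norm]
      have : x - y' = (1 - δ/‖u‖) • u := by
        rw [hy', hu]; module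
      rw [this, norm_smul, Real.norm_eq_abs]
      have h1 : (0:ℝ) ≤ 1 - δ/‖u‖ := by
        rw [sub_nonneg, div_le_one hunorm]; exact hδle
      rw [abs_of_nonneg h1]
      field_simp
    have : Metric.infDist x D ≤ dist x y' := Metric.infDist_le_dist_of_mem hy'D
    rw [hyd, dist_eq_norm, hdist] at this
    have : ‖x - y‖ ≤ ‖u‖ - δ := this
    rw [← hu] at this
    linarith
  obtain ⟨t, ht⟩ : y ∈ Set.range γ := hγD ▸ hyfr
  -- variational inequality
  have hproj : ∀ z ∈ D, ⟪x - y, z - y⟫ ≤ 0 := by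
    have hiInf : Metric.infDist x D = ⨅ w : D, ‖x - ↑w‖ := by
      rw [Metric.infDist_eq_iInf]
      simp only [dist_eq_norm]
    have : ‖x - y‖ = ⨅ w : D, ‖x - ↑w‖ := by
      rw [← hiInf, hyd, dist_eq_norm]
    exact (norm_eq_iInf_iff_real_inner_le_zero hDconv hyD).mp this
  -- tangency
  have hγdiff : Differentiable ℝ γ := hγ.differentiable (by norm_num)
  have htan : ⟪deriv γ t, x - y⟫ = 0 := by
    set ψ : ℝ → ℝ := fun s => ⟪x - γ s, x - γ s⟫ with hψ
    have hψd : ∀ s, HasDerivAt ψ (-(2 * ⟪deriv γ s, x - γ s⟫)) s := by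
      intro s
      have hf : HasDerivAt (fun s => x - γ s) (-(deriv γ s)) s := by
        have h := (hasDerivAt_const s x).sub (hγdiff s).hasDerivAt
        rwa [zero_sub] at h
      have h1 := HasDerivAt.inner ℝ hf hf
      have heq : ⟪x - γ s, -deriv γ s⟫ + ⟪-deriv γ s, x - γ s⟫ = -(2 * ⟪deriv γ s, x - γ s⟫) := by
        rw [inner_neg_left, inner_neg_right, real_inner_comm (x - γ s) (deriv γ s)]; ring
      rw [heq] at h1
      exact h1
    have hglob : ∀ s, ψ t ≤ ψ s := by
      intro s
      have h1 : ψ s = ‖x - γ s‖^2 := real_inner_self_eq_norm_sq _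
      have h2 : ψ t = ‖x - y‖^2 := by rw [hψ]; simp only [ht]; exact real_inner_self_eq_norm_sq _
      have h3 : γ s ∈ D := by
        have : γ s ∈ frontier D := hγD ▸ Set.mem_range_self s
        exact (hfrD ▸ this).1
      have h4 : ‖x - y‖ ≤ ‖x - γ s‖ := by
        rw [← dist_eq_norm, ← dist_eq_norm, ← hyd]
        exact Metric.infDist_le_dist_of_mem h3
      rw [h1, h2]
      exact pow_le_pow_left₀ (norm_nonneg _) h4 2
    have hmin : IsLocalMin ψ t := Filter.Eventually.of_forall hglob
    have := hmin.hasDerivAt_eq_zero (hψd t)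
    rw [ht] at this
    linarith [this]
  have hdec := planar_decomp (hunit t) (hNunit t) (hNorth t) (x - y)
  have htan' : ⟪x - y, deriv γ t⟫ = 0 := by rw [real_inner_comm]; exact htan
  rw [htan', zero_smul, zero_add] at hdec
  set b : ℝ := ⟪x - y, N t⟫ with hbdef
  have hbx : ⟪x - γ t, N t⟫ = b := by rw [ht]
  have hb0 : 0 ≤ b := hbx ▸ hx t
  rcases eq_or_lt_of_le hb0 with hb | hb
  · -- b = 0 : x = y ∈ D, contradiction
    apply hxD
    have : x - y = 0 := by rw [hdec, ← hb, zero_smul]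
    have : x = y := by rwa [sub_eq_zero] at this
    rw [this]; exact hyD
  · -- b > 0 : D lies in the hyperplane, contradicting nonempty interior
    have hzero : ∀ z ∈ D, ⟪N t, z - y⟫ = 0 := by
      intro z hz
      have h1 := hproj z hz
      rw [hdec, real_inner_smul_left] at h1
      have h2 : ⟪N t, z - y⟫ ≤ 0 := by
        by_contra hcon
        push_neg at hcon
        nlinarith
      have h3 : 0 ≤ ⟪z - γ t, N t⟫ := hNinner t z hz
      rw [ht, real_inner_comm] at h3
      linarith
    obtain ⟨p, hp⟩ := hDint
    obtain ⟨ε, hε, hball⟩ := Metric.isOpen_iff.mp isOpen_interior p hp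
    have hz1 : p ∈ D := interior_subset hp
    have hz2 : p + (ε/2) • N t ∈ D := by
      apply interior_subset
      apply hball
      rw [Metric.mem_ball, dist_eq_norm]
      have : p + (ε/2) • N t - p = (ε/2) • N t := by abel
      rw [this, norm_smul, Real.norm_eq_abs, abs_of_pos (by linarith), hNunit t]
      linarith
    have e1 := hzero p hz1
    have e2 := hzero _ hz2
    have : ⟪N t, p + (ε/2) • N t - y⟫ = ⟪N t, p - y⟫ + (ε/2) * ⟪N t, N t⟫ := by
      have : p + (ε/2) • N t - y = (p - y) + (ε/2) • N t := by abel
      rw [this, inner_add_right, real_inner_smul_right]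
    rw [this, e1] at e2
    have hNN : ⟪N t, N t⟫ = 1 := by
      have := real_inner_self_eq_norm_sq (N t)
      rw [hNunit t] at this; simpa using this
    rw [hNN] at e2
    linarith

set_option maxHeartbeats 2000000 in
theorem blaschke_key
    (D : Set (EuclideanSpace ℝ (Fin 2)))
    (hDcompact : IsCompact D) (hDconv : Convex ℝ D) (hDint : (interior D).Nonempty)
    (γ N : ℝ → EuclideanSpace ℝ (Fin 2))
    (hγ : ContDiff ℝ 2 γ) (hγD : frontier D = Set.range γ)
    (hunit : ∀ s, ‖deriv γ s‖ = 1)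
    (hNunit : ∀ s, ‖N s‖ = 1)
    (hNorth : ∀ s, ⟪deriv γ s, N s⟫ = 0)
    (hNinner : ∀ s, ∀ x ∈ D, 0 ≤ ⟪x - γ s, N s⟫)
    (l : ℝ) (hl : 0 < l)
    (hcurv : ∀ s, 0 < ⟪deriv (deriv γ) s, N s⟫ ∧ ⟪deriv (deriv γ) s, N s⟫ ≤ l) :
    ∀ s t : ℝ, 1/l ≤ ⟪(γ s + (1/l) • N s) - γ t, N t⟫ := by
  intro t₀
  -- differentiability plumbing
  have hγd : Differentiable ℝ γ := hγ.differentiable (by norm_num)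
  have h21 : ContDiff ℝ ((1:WithTop ℕ∞) + 1) γ := by
    have : ((1:WithTop ℕ∞) + 1) = 2 := by norm_num
    rw [this]; exact hγ
  have hG1 : ContDiff ℝ 1 (deriv γ) := (contDiff_succ_iff_deriv.mp h21).2.2
  set G : ℝ → EuclideanSpace ℝ (Fin 2) := deriv γ with hGdef
  set G2 : ℝ → EuclideanSpace ℝ (Fin 2) := deriv G with hG2def
  have hGd : Differentiable ℝ G := hG1.differentiable (by norm_num)
  have hd1 : ∀ u, HasDerivAt γ (G u) u := fun u => (hγd u).hasDerivAt
  have hd2 : ∀ u, HasDerivAt G (G2 u) u := fun u => (hGd u).hasDerivAt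
  have h10 : ContDiff ℝ ((0:WithTop ℕ∞) + 1) G := by
    have : ((0:WithTop ℕ∞) + 1) = 1 := by norm_num
    rw [this]; exact hG1
  have hcontG2 : Continuous G2 := by
    have := (contDiff_succ_iff_deriv.mp h10).2.2
    exact this.continuous
  have hcontG : Continuous G := hG1.continuous
  have hcontγ : Continuous γ := hγ.continuous
  -- second derivative is orthogonal to velocity
  have horth2 : ∀ u, ⟪G2 u, G u⟫ = 0 := by
    intro u
    have hfd : HasDerivAt (fun v => ⟪G v, G v⟫) (⟪G u, G2 u⟫ + ⟪G2 u, G u⟫) u :=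
      HasDerivAt.inner ℝ (hd2 u) (hd2 u)
    have hconst : (fun v => ⟪G v, G v⟫) = fun _ => (1:ℝ) := by
      funext v
      rw [real_inner_self_eq_norm_sq, hunit v]; norm_num
    have hf0 : HasDerivAt (fun v => ⟪G v, G v⟫) 0 u := by
      rw [hconst]; exact hasDerivAt_const u 1
    have h := hfd.unique hf0
    have hc := real_inner_comm (G u) (G2 u)
    linarith
  set κ : ℝ → ℝ := fun u => ⟪G2 u, N u⟫ with hκdef
  have hκpos : ∀ u, 0 < κ u := fun u => (hcurv u).1
  have hκle : ∀ u, κ u ≤ l := fun u => (hcurv u).2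
  -- moving frame inner product expansion
  have hG2e : ∀ u (v : EuclideanSpace ℝ (Fin 2)), ⟪G2 u, v⟫ = κ u * ⟪v, N u⟫ := by
    intro u v
    have h := planar_inner (hunit u) (hNunit u) (hNorth u) (G2 u) v
    rw [horth2 u] at h
    simp only [hκdef]
    rw [h]; ring
  have hκnorm : ∀ u, ‖G2 u‖ = κ u := by
    intro u
    have h1 : ⟪G2 u, G2 u⟫ = κ u * ⟪G2 u, N u⟫ := hG2e u (G2 u)
    rw [real_inner_self_eq_norm_sq] at h1
    have h2 : ‖G2 u‖^2 = (κ u)^2 := by rw [h1]; rw [hκdef]; ring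
    have h3 : (‖G2 u‖ - κ u) * (‖G2 u‖ + κ u) = 0 := by linear_combination h2
    rcases mul_eq_zero.mp h3 with h | h
    · linarith
    · nlinarith [norm_nonneg (G2 u), hκpos u]
  have hκcont : Continuous κ := by
    have : κ = fun u => ‖G2 u‖ := by funext u; rw [hκnorm u]
    rw [this]; exact hcontG2.norm
  -- base frame
  set e₀ : EuclideanSpace ℝ (Fin 2) := G t₀ with he₀
  set e₁ : EuclideanSpace ℝ (Fin 2) := N t₀ with he₁
  have hbinner := planar_inner (hunit t₀) (hNunit t₀) (hNorth t₀)
  have hbdecomp := planar_decomp (hunit t₀) (hNunit t₀) (hNorth t₀)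
  set x : ℝ → ℝ := fun u => ⟪G u, e₀⟫ with hxdef
  set y : ℝ → ℝ := fun u => ⟪G u, e₁⟫ with hydef
  set n₀ : ℝ → ℝ := fun u => ⟪N u, e₀⟫ with hn₀def
  set n₁ : ℝ → ℝ := fun u => ⟪N u, e₁⟫ with hn₁def
  have hxy1 : ∀ u, x u^2 + y u^2 = 1 := by
    intro u
    have := hbinner (G u) (G u)
    rw [real_inner_self_eq_norm_sq, hunit u] at this
    rw [hxdef, hydef]; nlinarith [this]
  have hnn1 : ∀ u, n₀ u^2 + n₁ u^2 = 1 := by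
    intro u
    have := hbinner (N u) (N u)
    rw [real_inner_self_eq_norm_sq, hNunit u] at this
    rw [hn₀def, hn₁def]; nlinarith [this]
  have hxn : ∀ u, x u * n₀ u + y u * n₁ u = 0 := by
    intro u
    have := hbinner (G u) (N u)
    rw [hNorth u] at this
    rw [hxdef, hydef, hn₀def, hn₁def]; linarith [this]
  -- continuity of coordinates
  have hxcont : Continuous x := hcontG.inner continuous_const
  have hycont : Continuous y := hcontG.inner continuous_const
  have hn₀cont : Continuous n₀ := by
    have heq : ∀ u, n₀ u = (κ u)⁻¹ * ⟪G2 u, e₀⟫ := by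
      intro u
      have h := hG2e u e₀
      rw [real_inner_comm (N u) e₀] at h
      show ⟪N u, e₀⟫ = (κ u)⁻¹ * ⟪G2 u, e₀⟫
      rw [h, inv_mul_cancel_left₀ (ne_of_gt (hκpos u))]
    have : n₀ = fun u => (κ u)⁻¹ * ⟪G2 u, e₀⟫ := funext heq
    rw [this]
    exact (hκcont.inv₀ (fun u => ne_of_gt (hκpos u))).mul (hcontG2.inner continuous_const)
  have hn₁cont : Continuous n₁ := by
    have heq : ∀ u, n₁ u = (κ u)⁻¹ * ⟪G2 u, e₁⟫ := by
      intro u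
      have h := hG2e u e₁
      rw [real_inner_comm (N u) e₁] at h
      show ⟪N u, e₁⟫ = (κ u)⁻¹ * ⟪G2 u, e₁⟫
      rw [h, inv_mul_cancel_left₀ (ne_of_gt (hκpos u))]
    have : n₁ = fun u => (κ u)⁻¹ * ⟪G2 u, e₁⟫ := funext heq
    rw [this]
    exact (hκcont.inv₀ (fun u => ne_of_gt (hκpos u))).mul (hcontG2.inner continuous_const)
  -- orientation is constant
  have hε1 : ∀ u, x u * n₁ u - y u * n₀ u = 1 := by
    have hcont : Continuous (fun u => x u * n₁ u - y u * n₀ u) :=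
      (hxcont.mul hn₁cont).sub (hycont.mul hn₀cont)
    have hsq : ∀ u, (x u * n₁ u - y u * n₀ u)^2 = 1 := by
      intro u
      linear_combination (n₀ u^2 + n₁ u^2) * hxy1 u + hnn1 u - (x u * n₀ u + y u * n₁ u) * hxn u
    have h0 : x t₀ * n₁ t₀ - y t₀ * n₀ t₀ = 1 := by
      have hx0 : x t₀ = 1 := by
        show ⟪G t₀, G t₀⟫ = 1
        rw [real_inner_self_eq_norm_sq, hunit t₀]; norm_num
      have hy0 : y t₀ = 0 := hNorth t₀
      have hn₀0 : n₀ t₀ = 0 := by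
        show ⟪N t₀, G t₀⟫ = 0
        rw [real_inner_comm]; exact hNorth t₀
      have hn₁0 : n₁ t₀ = 1 := by
        show ⟪N t₀, N t₀⟫ = 1
        rw [real_inner_self_eq_norm_sq, hNunit t₀]; norm_num
      rw [hx0, hy0, hn₀0, hn₁0]; ring
    exact const_of_cont_sq_one hcont hsq h0
  have hn₁x : ∀ u, n₁ u = x u := by
    intro u
    linear_combination -(n₁ u) * hxy1 u + x u * hε1 u + y u * hxn u
  have hn₀y : ∀ u, n₀ u = - y u := by
    intro u
    linear_combination -(n₀ u) * hxy1 u - y u * hε1 u + x u * hxn u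

  -- derivatives of coordinates
  have hx' : ∀ u, HasDerivAt x (-(κ u * y u)) u := by
    intro u
    have h := HasDerivAt.inner ℝ (hd2 u) (hasDerivAt_const u e₀)
    have heq : ⟪G u, (0:EuclideanSpace ℝ (Fin 2))⟫ + ⟪G2 u, e₀⟫ = -(κ u * y u) := by
      rw [inner_zero_right, hG2e u e₀]
      have hcm : ⟪e₀, N u⟫ = n₀ u := real_inner_comm _ _
      rw [hcm, hn₀y u]; ring
    rw [heq] at h
    exact h
  have hy' : ∀ u, HasDerivAt y (κ u * x u) u := by
    intro u
    have h := HasDerivAt.inner ℝ (hd2 u) (hasDerivAt_const u e₁)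
    have heq : ⟪G u, (0:EuclideanSpace ℝ (Fin 2))⟫ + ⟪G2 u, e₁⟫ = κ u * x u := by
      rw [inner_zero_right, hG2e u e₁]
      have hcm : ⟪e₁, N u⟫ = n₁ u := real_inner_comm _ _
      rw [hcm, hn₁x u, zero_add]
    rw [heq] at h
    exact h
  -- turning angle
  set θ : ℝ → ℝ := fun u => ∫ v in t₀..u, κ v with hθdef
  have hθd : ∀ u, HasDerivAt θ (κ u) u := by
    intro u
    exact intervalIntegral.integral_hasDerivAt_right (hκcont.intervalIntegrable _ _)
      hκcont.stronglyMeasurable.stronglyMeasurableAtFilter hκcont.continuousAt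
  have hθcont : Continuous θ := continuous_iff_continuousAt.mpr fun u => (hθd u).continuousAt
  have hθ0 : θ t₀ = 0 := intervalIntegral.integral_same
  have hθmono : StrictMono θ :=
    strictMono_of_deriv_pos (fun u => by rw [(hθd u).deriv]; exact hκpos u)
  -- the frame is given by cos/sin of the turning angle
  have hframe : ∀ u, x u = Real.cos (θ u) ∧ y u = Real.sin (θ u) := by
    have hcosd : ∀ u, HasDerivAt (fun v => Real.cos (θ v)) (-Real.sin (θ u) * κ u) u :=
      fun u => (Real.hasDerivAt_cos (θ u)).comp u (hθd u)
    have hsind : ∀ u, HasDerivAt (fun v => Real.sin (θ v)) (Real.cos (θ u) * κ u) u :=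
      fun u => (Real.hasDerivAt_sin (θ u)).comp u (hθd u)
    set E : ℝ → ℝ := fun u => (x u - Real.cos (θ u))^2 + (y u - Real.sin (θ u))^2 with hEdef
    have hEd : ∀ u, HasDerivAt E 0 u := by
      intro u
      have h1 : HasDerivAt (fun v => x v - Real.cos (θ v))
          (-(κ u * y u) - (-Real.sin (θ u) * κ u)) u := (hx' u).sub (hcosd u)
      have h2 : HasDerivAt (fun v => y v - Real.sin (θ v))
          (κ u * x u - Real.cos (θ u) * κ u) u := (hy' u).sub (hsind u)
      have h3 := (h1.pow 2).add (h2.pow 2)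
      exact h3.congr_deriv (by
      push_cast
      ring)
    have hconst := is_const_of_deriv_eq_zero
      (fun u => (hEd u).differentiableAt) (fun u => (hEd u).deriv)
    have hE0 : E t₀ = 0 := by
      have hx0 : x t₀ = 1 := by
        show ⟪G t₀, G t₀⟫ = 1
        rw [real_inner_self_eq_norm_sq, hunit t₀]; norm_num
      have hy0 : y t₀ = 0 := hNorth t₀
      rw [hEdef]
      simp only [hθ0, Real.cos_zero, Real.sin_zero, hx0, hy0]
      norm_num
    intro u
    have hEu : E u = 0 := (hconst u t₀).trans hE0
    have hEu' : (x u - Real.cos (θ u))^2 + (y u - Real.sin (θ u))^2 = 0 := hEu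
    have s1 : (x u - Real.cos (θ u))^2 = 0 := by
      linarith [hEu', sq_nonneg (x u - Real.cos (θ u)), sq_nonneg (y u - Real.sin (θ u))]
    have s2 : (y u - Real.sin (θ u))^2 = 0 := by
      linarith [hEu', sq_nonneg (x u - Real.cos (θ u)), sq_nonneg (y u - Real.sin (θ u))]
    have e1 := pow_eq_zero_iff (n := 2) (by norm_num) |>.mp s1
    have e2 := pow_eq_zero_iff (n := 2) (by norm_num) |>.mp s2
    constructor
    · linarith
    · linarith
  have hxcos : ∀ u, x u = Real.cos (θ u) := fun u => (hframe u).1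
  have hysin : ∀ u, y u = Real.sin (θ u) := fun u => (hframe u).2
  have hn₀cos : ∀ u, n₀ u = -Real.sin (θ u) := fun u => by rw [hn₀y u, hysin u]
  have hn₁cos : ∀ u, n₁ u = Real.cos (θ u) := fun u => by rw [hn₁x u, hxcos u]

  -- position coordinates
  set X : ℝ → ℝ := fun u => ⟪γ u - γ t₀, e₀⟫ with hXdef
  set Y : ℝ → ℝ := fun u => ⟪γ u - γ t₀, e₁⟫ with hYdef
  have hX' : ∀ u, HasDerivAt X (Real.cos (θ u)) u := by
    intro u
    have hsub : HasDerivAt (fun v => γ v - γ t₀) (G u) u := (hd1 u).sub_const _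
    have h := HasDerivAt.inner ℝ hsub (hasDerivAt_const u e₀)
    have heq : ⟪γ u - γ t₀, (0:EuclideanSpace ℝ (Fin 2))⟫ + ⟪G u, e₀⟫ = Real.cos (θ u) := by
      rw [inner_zero_right, zero_add]
      exact hxcos u
    rw [heq] at h; exact h
  have hY' : ∀ u, HasDerivAt Y (Real.sin (θ u)) u := by
    intro u
    have hsub : HasDerivAt (fun v => γ v - γ t₀) (G u) u := (hd1 u).sub_const _
    have h := HasDerivAt.inner ℝ hsub (hasDerivAt_const u e₁)
    have heq : ⟪γ u - γ t₀, (0:EuclideanSpace ℝ (Fin 2))⟫ + ⟪G u, e₁⟫ = Real.sin (θ u) := by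
      rw [inner_zero_right, zero_add]
      exact hysin u
    rw [heq] at h; exact h
  have hX0 : X t₀ = 0 := by show ⟪γ t₀ - γ t₀, e₀⟫ = 0; simp
  have hY0 : Y t₀ = 0 := by show ⟪γ t₀ - γ t₀, e₁⟫ = 0; simp
  -- continuity helpers
  have hccos : Continuous (fun u => Real.cos (θ u)) := Real.continuous_cos.comp hθcont
  have hcsin : Continuous (fun u => Real.sin (θ u)) := Real.continuous_sin.comp hθcont
  -- FTC evaluations
  have hI1 : ∀ t, (∫ u in t₀..t, Real.cos (θ u)) = X t := by
    intro t
    have h := intervalIntegral.integral_eq_sub_of_hasDerivAt (a := t₀) (b := t) (f := X)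
      (f' := fun u => Real.cos (θ u)) (fun u _ => hX' u) (hccos.intervalIntegrable _ _)
    rw [h, hX0, sub_zero]
  have hI3 : ∀ t, (∫ u in t₀..t, Real.sin (θ u)) = Y t := by
    intro t
    have h := intervalIntegral.integral_eq_sub_of_hasDerivAt (a := t₀) (b := t) (f := Y)
      (f' := fun u => Real.sin (θ u)) (fun u _ => hY' u) (hcsin.intervalIntegrable _ _)
    rw [h, hY0, sub_zero]
  have hI2 : ∀ t, (∫ u in t₀..t, κ u * Real.cos (θ u)) = Real.sin (θ t) := by
    intro t
    have hd : ∀ u, HasDerivAt (fun v => Real.sin (θ v)) (κ u * Real.cos (θ u)) u := by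
      intro u
      have h := (Real.hasDerivAt_sin (θ u)).comp u (hθd u)
      exact h.congr_deriv (by ring)
    have h := intervalIntegral.integral_eq_sub_of_hasDerivAt (a := t₀) (b := t) (fun u _ => hd u)
      ((hκcont.mul hccos).intervalIntegrable _ _)
    rw [h, hθ0, Real.sin_zero, sub_zero]
  have hI4 : ∀ t, (∫ u in t₀..t, κ u * Real.sin (θ u)) = 1 - Real.cos (θ t) := by
    intro t
    have hd : ∀ u, HasDerivAt (fun v => -Real.cos (θ v)) (κ u * Real.sin (θ u)) u := by
      intro u
      have h := ((Real.hasDerivAt_cos (θ u)).comp u (hθd u)).neg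
      exact h.congr_deriv (by ring)
    have h := intervalIntegral.integral_eq_sub_of_hasDerivAt (a := t₀) (b := t) (fun u _ => hd u)
      ((hκcont.mul hcsin).intervalIntegrable _ _)
    rw [h, hθ0, Real.cos_zero]
    ring
  -- the central identity
  have hGid : ∀ t, ⟪(γ t₀ + (1/l) • N t₀) - γ t, N t⟫
      = Real.sin (θ t) * X t - Real.cos (θ t) * Y t + Real.cos (θ t)/l := by
    intro t
    have hsplit : (γ t₀ + (1/l) • N t₀) - γ t = (γ t₀ - γ t) + (1/l) • N t₀ := by
      abel
    rw [hsplit, inner_add_left, real_inner_smul_left]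
    have hXt : ⟪γ t - γ t₀, G t₀⟫ = X t := rfl
    have hYt : ⟪γ t - γ t₀, N t₀⟫ = Y t := rfl
    have hn0t : ⟪N t, G t₀⟫ = n₀ t := rfl
    have hn1t : ⟪N t, N t₀⟫ = n₁ t := rfl
    have h1 : ⟪γ t₀ - γ t, N t⟫ = -(X t * n₀ t) - Y t * n₁ t := by
      have key := hbinner (γ t₀ - γ t) (N t)
      have hneg : γ t₀ - γ t = -(γ t - γ t₀) := by abel
      rw [hneg] at key
      simp only [inner_neg_left] at key
      rw [hXt, hYt, hn0t, hn1t] at key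
      rw [hneg, inner_neg_left]
      linarith [key]
    have h2 : ⟪N t₀, N t⟫ = n₁ t := real_inner_comm _ _
    rw [h1, h2, hn₀cos t, hn₁cos t]
    ring
  -- local lemma: the inequality holds when |θ t| ≤ π
  have hlocal : ∀ t, -Real.pi ≤ θ t → θ t ≤ Real.pi →
      1/l ≤ ⟪(γ t₀ + (1/l) • N t₀) - γ t, N t⟫ := by
    intro t hge hle
    have hcint : Continuous (fun u => (1 - κ u / l) * Real.sin (θ t - θ u)) := by
      apply Continuous.mul
      · exact (continuous_const.sub (hκcont.div_const l))
      · exact Real.continuous_sin.comp (continuous_const.sub hθcont)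
    have hJ : 0 ≤ ∫ u in t₀..t, (1 - κ u / l) * Real.sin (θ t - θ u) := by
      have hfac : ∀ u, 0 ≤ 1 - κ u / l := by
        intro u
        have h1 : κ u / l ≤ 1 := by rw [div_le_one hl]; exact hκle u
        linarith
      rcases le_total 0 (θ t) with hsgn | hsgn
      · have htt0 : t₀ ≤ t := by
          by_contra hc
          push_neg at hc
          have := hθmono hc
          rw [hθ0] at this
          linarith
        apply intervalIntegral.integral_nonneg htt0
        intro u hu
        have h2 : 0 ≤ θ t - θ u := by
          have := hθmono.monotone hu.2
          linarith
        have h0u : 0 ≤ θ u := by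
          have := hθmono.monotone hu.1
          linarith [hθ0]
        exact mul_nonneg (hfac u) (Real.sin_nonneg_of_nonneg_of_le_pi h2 (by linarith))
      · have htt0 : t ≤ t₀ := by
          by_contra hc
          push_neg at hc
          have := hθmono hc
          rw [hθ0] at this
          linarith
        have hnn : ∀ u ∈ Set.Icc t t₀, (1 - κ u / l) * Real.sin (θ t - θ u) ≤ 0 := by
          intro u hu
          have h2 : 0 ≤ θ u - θ t := by
            have := hθmono.monotone hu.1
            linarith
          have h0u : θ u ≤ 0 := by
            have := hθmono.monotone hu.2
            linarith [hθ0]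
          have hsle : Real.sin (θ t - θ u) ≤ 0 := by
            have : Real.sin (θ u - θ t) = -Real.sin (θ t - θ u) := by
              rw [← Real.sin_neg]; congr 1; ring
            have hpos := Real.sin_nonneg_of_nonneg_of_le_pi h2 (by linarith)
            linarith [this ▸ hpos]
          exact mul_nonpos_of_nonneg_of_nonpos (hfac u) hsle
        have h2 : 0 ≤ ∫ u in t..t₀, -((1 - κ u / l) * Real.sin (θ t - θ u)) := by
          apply intervalIntegral.integral_nonneg htt0
          intro u hu
          have := hnn u hu
          linarith
        rw [intervalIntegral.integral_neg] at h2
        have h3 := intervalIntegral.integral_symm (a := t) (b := t₀)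
          (f := fun u => (1 - κ u / l) * Real.sin (θ t - θ u)) (μ := MeasureTheory.volume)
        rw [h3]
        linarith
    -- evaluate the integral
    have hint1 : IntervalIntegrable (fun u => Real.cos (θ u)) MeasureTheory.volume t₀ t :=
      hccos.intervalIntegrable _ _
    have hint2 : IntervalIntegrable (fun u => κ u * Real.cos (θ u) / l) MeasureTheory.volume t₀ t :=
      ((hκcont.mul hccos).div_const l).intervalIntegrable _ _
    have hint3 : IntervalIntegrable (fun u => Real.sin (θ u)) MeasureTheory.volume t₀ t :=
      hcsin.intervalIntegrable _ _
    have hint4 : IntervalIntegrable (fun u => κ u * Real.sin (θ u) / l) MeasureTheory.volume t₀ t :=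
      ((hκcont.mul hcsin).div_const l).intervalIntegrable _ _
    have hsplitint : (fun u => (1 - κ u / l) * Real.sin (θ t - θ u))
        = fun u => Real.sin (θ t) * (Real.cos (θ u) - κ u * Real.cos (θ u) / l)
          - Real.cos (θ t) * (Real.sin (θ u) - κ u * Real.sin (θ u) / l) := by
      funext u
      rw [Real.sin_sub]
      ring
    rw [hsplitint] at hJ
    rw [intervalIntegral.integral_sub (((hint1.sub hint2).const_mul _))
        (((hint3.sub hint4).const_mul _))] at hJ
    rw [intervalIntegral.integral_const_mul, intervalIntegral.integral_const_mul] at hJ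
    rw [intervalIntegral.integral_sub hint1 hint2, intervalIntegral.integral_sub hint3 hint4] at hJ
    have hdiv1 : (∫ u in t₀..t, κ u * Real.cos (θ u) / l) = Real.sin (θ t) / l := by
      rw [intervalIntegral.integral_div, hI2]
    have hdiv2 : (∫ u in t₀..t, κ u * Real.sin (θ u) / l) = (1 - Real.cos (θ t)) / l := by
      rw [intervalIntegral.integral_div, hI4]
    rw [hdiv1, hdiv2, hI1, hI3] at hJ
    -- conclude
    rw [hGid t]
    have hpyth := Real.sin_sq_add_cos_sq (θ t)
    have hl' : l ≠ 0 := ne_of_gt hl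
    have expand : Real.sin (θ t) * (X t - Real.sin (θ t)/l)
        - Real.cos (θ t) * (Y t - (1 - Real.cos (θ t))/l)
        = Real.sin (θ t) * X t - Real.cos (θ t) * Y t + Real.cos (θ t)/l - 1/l := by
      linear_combination (-(1:ℝ)/l) * hpyth
    rw [expand] at hJ
    linarith

  -- every curve point is in D
  have hDclosed : IsClosed D := hDcompact.isClosed
  have hγmem : ∀ u, γ u ∈ D := by
    intro u
    have h1 : γ u ∈ frontier D := hγD ▸ Set.mem_range_self u
    have h2 := frontier_subset_closure h1
    rwa [hDclosed.closure_eq] at h2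
  -- periodicity of the supporting data
  have hNdecomp : ∀ u, N u = n₀ u • G t₀ + n₁ u • N t₀ := fun u => hbdecomp (N u)
  have hper : ∀ a b, θ b = θ a + 2*Real.pi → N b = N a ∧ ⟪γ b - γ a, N a⟫ = 0 := by
    intro a b hab
    have hNb : N b = N a := by
      rw [hNdecomp a, hNdecomp b]
      rw [hn₀cos a, hn₀cos b, hn₁cos a, hn₁cos b, hab]
      rw [Real.sin_add_two_pi, Real.cos_add_two_pi]
    refine ⟨hNb, ?_⟩
    have h1 := hNinner a (γ b) (hγmem b)
    have h2 := hNinner b (γ a) (hγmem a)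
    rw [hNb] at h2
    have h3 : ⟪γ a - γ b, N a⟫ = -⟪γ b - γ a, N a⟫ := by
      rw [show γ a - γ b = -(γ b - γ a) by abel, inner_neg_left]
    rw [h3] at h2
    linarith
  -- boundedness of D
  obtain ⟨R, hRb⟩ : ∃ R : ℝ, ∀ z ∈ D, ‖z‖ ≤ R := by
    obtain ⟨R, hR⟩ := hDcompact.isBounded.subset_closedBall 0
    exact ⟨R, fun z hz => by simpa using mem_closedBall_zero_iff.mp (hR hz)⟩
  have hR0 : 0 ≤ R := le_trans (norm_nonneg _) (hRb _ (hγmem t₀))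
  -- derivative of projections
  have hdirF : ∀ (w : EuclideanSpace ℝ (Fin 2)) u, HasDerivAt (fun v => ⟪γ v, w⟫) (⟪G u, w⟫) u := by
    intro w u
    have h := HasDerivAt.inner ℝ (hd1 u) (hasDerivAt_const u w)
    rw [inner_zero_right, zero_add] at h
    exact h
  -- the inner product against a unit direction built from the base frame
  have hdirnorm : ∀ α : ℝ, ‖Real.cos α • e₀ + Real.sin α • e₁‖ = 1 := by
    intro α
    set T : EuclideanSpace ℝ (Fin 2) := Real.cos α • e₀ + Real.sin α • e₁ with hT
    have h0 : ⟪T, G t₀⟫ = Real.cos α := by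
      rw [hT, inner_add_left, real_inner_smul_left, real_inner_smul_left]
      have h1 : ⟪e₀, G t₀⟫ = (1:ℝ) := by
        show ⟪G t₀, G t₀⟫ = 1
        rw [real_inner_self_eq_norm_sq, hunit t₀]; norm_num
      have h2 : ⟪e₁, G t₀⟫ = (0:ℝ) := by
        show ⟪N t₀, G t₀⟫ = 0
        rw [real_inner_comm]; exact hNorth t₀
      rw [h1, h2]; ring
    have h0' : ⟪T, N t₀⟫ = Real.sin α := by
      rw [hT, inner_add_left, real_inner_smul_left, real_inner_smul_left]
      have h1 : ⟪e₀, N t₀⟫ = (0:ℝ) := hNorth t₀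
      have h2 : ⟪e₁, N t₀⟫ = (1:ℝ) := by
        show ⟪N t₀, N t₀⟫ = 1
        rw [real_inner_self_eq_norm_sq, hNunit t₀]; norm_num
      rw [h1, h2]; ring
    have hTT : ⟪T, T⟫ = 1 := by
      rw [hbinner T T, h0, h0']
      linear_combination Real.cos_sq_add_sin_sq α
    have hsq : ‖T‖^2 = 1 := by rw [← real_inner_self_eq_norm_sq]; exact hTT
    have hfac : (‖T‖ - 1) * (‖T‖ + 1) = 0 := by linear_combination hsq
    rcases mul_eq_zero.mp hfac with h | h
    · linarith
    · nlinarith [norm_nonneg T]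
  have hGdir : ∀ (α : ℝ) u, ⟪G u, Real.cos α • e₀ + Real.sin α • e₁⟫ = Real.cos (θ u - α) := by
    intro α u
    rw [inner_add_right, real_inner_smul_right, real_inner_smul_right]
    have h1 : ⟪G u, e₀⟫ = Real.cos (θ u) := hxcos u
    have h2 : ⟪G u, e₁⟫ = Real.sin (θ u) := hysin u
    rw [h1, h2, Real.cos_sub]
    ring
  -- θ is unbounded above
  have hub : ∀ C : ℝ, ∃ u, C ≤ θ u := by
    by_contra hcon
    push_neg at hcon
    obtain ⟨C, hC⟩ := hcon
    have hbdd : BddAbove (Set.range θ) := by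
      refine ⟨C, ?_⟩
      rintro v ⟨u, rfl⟩
      exact (hC u).le
    have htend : Filter.Tendsto θ Filter.atTop (nhds (⨆ u, θ u)) :=
      tendsto_atTop_ciSup hθmono.monotone hbdd
    set α := ⨆ u, θ u with hα
    set T : EuclideanSpace ℝ (Fin 2) := Real.cos α • e₀ + Real.sin α • e₁ with hT
    set F : ℝ → ℝ := fun u => ⟪γ u, T⟫ with hF
    have hFd : ∀ u, HasDerivAt F (Real.cos (θ u - α)) u := by
      intro u
      have h := hdirF T u
      rw [hGdir α u] at h
      exact h
    have htendc : Filter.Tendsto (fun u => Real.cos (θ u - α)) Filter.atTop (nhds 1) := by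
      have h1 : Filter.Tendsto (fun u => θ u - α) Filter.atTop (nhds 0) := by
        have h2 := htend.sub_const α
        simpa using h2
      have h2 := (Real.continuous_cos.tendsto 0).comp h1
      rwa [Real.cos_zero] at h2
    have hev : ∀ᶠ u in Filter.atTop, (1:ℝ)/2 ≤ Real.cos (θ u - α) :=
      htendc.eventually (eventually_ge_nhds (by norm_num))
    obtain ⟨S, hS⟩ := Filter.eventually_atTop.mp hev
    have hFcont : Continuous F := hcontγ.inner continuous_const
    have hmono : MonotoneOn (fun u => F u - u/2) (Set.Ici S) := by
      apply monotoneOn_of_deriv_nonneg (convex_Ici S)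
      · exact (hFcont.sub (continuous_id.div_const 2)).continuousOn
      · intro u _
        exact ((hFd u).sub ((hasDerivAt_id u).div_const 2)).differentiableAt.differentiableWithinAt
      · intro u hu
        rw [interior_Ici] at hu
        have hid : HasDerivAt (fun v : ℝ => v/2) (1/2) u := (hasDerivAt_id u).div_const 2
        rw [show deriv (fun u => F u - u / 2) u = _ from ((hFd u).sub hid).deriv]
        have := hS u (le_of_lt hu)
        linarith
    set u₁ : ℝ := S + 2*(R + |F S| + 1) with hu₁def
    have hu₁ : S ≤ u₁ := by
      have := abs_nonneg (F S)
      rw [hu₁def]; linarith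
    have h1 := hmono Set.self_mem_Ici hu₁ hu₁
    have h2 : F u₁ ≤ R := by
      have ha := abs_real_inner_le_norm (γ u₁) T
      rw [hdirnorm α] at ha
      have hb := hRb _ (hγmem u₁)
      calc F u₁ ≤ |⟪γ u₁, T⟫| := le_abs_self _
        _ ≤ ‖γ u₁‖ * 1 := by rw [hT] at ha ⊢; exact ha
        _ ≤ R := by linarith
    have h3 : F S ≥ -(R + |F S|) := by
      have := neg_abs_le (F S)
      have := abs_nonneg (F S)
      linarith [neg_abs_le (F S)]
    rw [hu₁def] at h1
    have := abs_nonneg (F S)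
    have := neg_abs_le (F S)
    linarith
  -- θ is unbounded below
  have hlb : ∀ C : ℝ, ∃ u, θ u ≤ C := by
    by_contra hcon
    push_neg at hcon
    obtain ⟨C, hC⟩ := hcon
    have hbdd : BddBelow (Set.range θ) := by
      refine ⟨C, ?_⟩
      rintro v ⟨u, rfl⟩
      exact (hC u).le
    have htend : Filter.Tendsto θ Filter.atBot (nhds (⨅ u, θ u)) :=
      tendsto_atBot_ciInf hθmono.monotone hbdd
    set α := ⨅ u, θ u with hα
    set T : EuclideanSpace ℝ (Fin 2) := Real.cos α • e₀ + Real.sin α • e₁ with hT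
    set F : ℝ → ℝ := fun u => ⟪γ u, T⟫ with hF
    have hFd : ∀ u, HasDerivAt F (Real.cos (θ u - α)) u := by
      intro u
      have h := hdirF T u
      rw [hGdir α u] at h
      exact h
    have htendc : Filter.Tendsto (fun u => Real.cos (θ u - α)) Filter.atBot (nhds 1) := by
      have h1 : Filter.Tendsto (fun u => θ u - α) Filter.atBot (nhds 0) := by
        have h2 := htend.sub_const α
        simpa using h2
      have h2 := (Real.continuous_cos.tendsto 0).comp h1
      rwa [Real.cos_zero] at h2
    have hev : ∀ᶠ u in Filter.atBot, (1:ℝ)/2 ≤ Real.cos (θ u - α) :=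
      htendc.eventually (eventually_ge_nhds (by norm_num))
    obtain ⟨S, hS⟩ := Filter.eventually_atBot.mp hev
    have hFcont : Continuous F := hcontγ.inner continuous_const
    have hmono : MonotoneOn (fun u => F u - u/2) (Set.Iic S) := by
      apply monotoneOn_of_deriv_nonneg (convex_Iic S)
      · exact (hFcont.sub (continuous_id.div_const 2)).continuousOn
      · intro u _
        exact ((hFd u).sub ((hasDerivAt_id u).div_const 2)).differentiableAt.differentiableWithinAt
      · intro u hu
        rw [interior_Iic] at hu
        have hid : HasDerivAt (fun v : ℝ => v/2) (1/2) u := (hasDerivAt_id u).div_const 2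
        rw [show deriv (fun u => F u - u / 2) u = _ from ((hFd u).sub hid).deriv]
        have := hS u (le_of_lt hu)
        linarith
    set u₁ : ℝ := S - 2*(R + |F S| + 1) with hu₁def
    have hu₁ : u₁ ≤ S := by
      have := abs_nonneg (F S)
      rw [hu₁def]; linarith
    have h1 := hmono (show u₁ ∈ Set.Iic S from hu₁) Set.self_mem_Iic hu₁
    have h2 : -R ≤ F u₁ := by
      have ha := abs_real_inner_le_norm (γ u₁) T
      rw [hdirnorm α] at ha
      have hb := hRb _ (hγmem u₁)
      have hc : |F u₁| ≤ R := by
        rw [hF]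
        calc |⟪γ u₁, T⟫| ≤ ‖γ u₁‖ * 1 := by rw [hT] at ha ⊢; exact ha
          _ ≤ R := by linarith
      linarith [neg_abs_le (F u₁), abs_nonneg (F u₁)]
    rw [hu₁def] at h1
    have := abs_nonneg (F S)
    have := le_abs_self (F S)
    linarith
  -- θ is surjective
  have hsurj : ∀ c : ℝ, ∃ u, θ u = c := by
    intro c
    obtain ⟨a, ha⟩ := hlb c
    obtain ⟨b, hb⟩ := hub c
    rcases le_total a b with hab | hab
    · obtain ⟨u, _, hu⟩ := intermediate_value_Icc hab hθcont.continuousOn ⟨ha, hb⟩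
      exact ⟨u, hu⟩
    · exact ⟨b, le_antisymm (le_trans (hθmono.monotone hab) ha) hb⟩
  -- chained periodicity
  have hchain : ∀ (j : ℕ) (a b : ℝ), θ b = θ a + 2*Real.pi*j →
      N b = N a ∧ ⟪γ b - γ a, N a⟫ = 0 := by
    intro j
    induction j with
    | zero =>
      intro a b h
      have hba : b = a := hθmono.injective (by rw [h]; push_cast; ring)
      subst hba
      exact ⟨rfl, by simp⟩
    | succ j ih =>
      intro a b h
      obtain ⟨c, hc⟩ := hsurj (θ a + 2*Real.pi*j)
      have h1 := ih a c hc
      have h2 := hper c b (by rw [h, hc]; push_cast; ring)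
      refine ⟨h2.1.trans h1.1, ?_⟩
      have hsum : γ b - γ a = (γ b - γ c) + (γ c - γ a) := by abel
      rw [hsum, inner_add_left]
      have e1 : ⟪γ b - γ c, N a⟫ = 0 := by rw [← h1.1]; exact h2.2
      rw [e1, h1.2]
      ring
  -- conclusion
  intro t
  have hπ := Real.pi_pos
  set k : ℤ := ⌈(θ t - Real.pi)/(2*Real.pi)⌉ with hk
  have hk1 : θ t - 2*Real.pi*k ≤ Real.pi := by
    have h := Int.le_ceil ((θ t - Real.pi)/(2*Real.pi))
    rw [div_le_iff₀ (by positivity)] at h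
    rw [← hk] at h
    linarith
  have hk2 : -Real.pi ≤ θ t - 2*Real.pi*k := by
    have h := Int.ceil_lt_add_one ((θ t - Real.pi)/(2*Real.pi))
    rw [← hk] at h
    have h2 : ((k:ℝ) - 1) * (2*Real.pi) < θ t - Real.pi := by
      rw [← lt_div_iff₀ (by positivity)]
      linarith
    linarith
  obtain ⟨t', ht'⟩ := hsurj (θ t - 2*Real.pi*k)
  have hloc := hlocal t' (by rw [ht']; linarith) (by rw [ht']; linarith)
  rcases le_or_gt 0 k with hk0 | hk0
  · have hcast : ((k.toNat : ℕ) : ℝ) = (k : ℝ) := by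
      exact_mod_cast congrArg (fun z : ℤ => (z : ℝ)) (Int.toNat_of_nonneg hk0)
    have hnat : θ t = θ t' + 2*Real.pi*((k.toNat : ℕ) : ℝ) := by
      rw [ht', hcast]; ring
    obtain ⟨hN, hz⟩ := hchain k.toNat t' t hnat
    rw [hN]
    have hsum : (γ t₀ + (1/l) • N t₀) - γ t
        = ((γ t₀ + (1/l) • N t₀) - γ t') - (γ t - γ t') := by abel
    rw [hsum, inner_sub_left, hz, sub_zero]
    exact hloc
  · have hk0' : (0:ℤ) ≤ -k := by omega
    have hcast : (((-k).toNat : ℕ) : ℝ) = -(k : ℝ) := by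
      exact_mod_cast congrArg (fun z : ℤ => (z : ℝ)) (Int.toNat_of_nonneg hk0')
    have hnat : θ t' = θ t + 2*Real.pi*(((-k).toNat : ℕ) : ℝ) := by
      rw [ht', hcast]; ring
    obtain ⟨hN, hz⟩ := hchain (-k).toNat t t' hnat
    rw [hN] at hloc
    have hsum : (γ t₀ + (1/l) • N t₀) - γ t'
        = ((γ t₀ + (1/l) • N t₀) - γ t) - (γ t' - γ t) := by abel
    rw [hsum, inner_sub_left, hz, sub_zero] at hloc
    exact hloc





/-- Blaschke's Rolling Theorem, part B, plane version with explicit boundary curve: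
if the frontier of a compact convex plane set `D` is traced by a unit-speed C² curve
`γ` with inner unit normal `N` and curvature `0 < ⟪γ''(s), N(s)⟫ ≤ l`, then the
closed disc of radius `1/l` centered at `γ(s) + (1/l)·N(s)` is contained in `D`. -/
theorem blaschke_rolling_B_plane
    (D : Set (EuclideanSpace ℝ (Fin 2)))
    (hDcompact : IsCompact D) (hDconv : Convex ℝ D) (hDint : (interior D).Nonempty)
    (γ N : ℝ → EuclideanSpace ℝ (Fin 2))
    (hγ : ContDiff ℝ 2 γ) (hγD : frontier D = Set.range γ)
    (hunit : ∀ s, ‖deriv γ s‖ = 1)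
    (hNunit : ∀ s, ‖N s‖ = 1)
    (hNorth : ∀ s, ⟪deriv γ s, N s⟫ = 0)
    (hNinner : ∀ s, ∀ x ∈ D, 0 ≤ ⟪x - γ s, N s⟫)
    (l : ℝ) (hl : 0 < l)
    (hcurv : ∀ s, 0 < ⟪deriv (deriv γ) s, N s⟫ ∧ ⟪deriv (deriv γ) s, N s⟫ ≤ l) :
    ∀ s : ℝ, Metric.closedBall (γ s + (1 / l) • N s) (1 / l) ⊆ D := by
  intro s₀ z hz
  apply mem_of_inner_nonneg D hDcompact hDconv hDint γ N hγ hγD hunit hNunit hNorth hNinner z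
  intro t
  have hkey := blaschke_key D hDcompact hDconv hDint γ N hγ hγD hunit hNunit hNorth hNinner
    l hl hcurv s₀ t
  have hsplit : z - γ t = (z - (γ s₀ + (1/l) • N s₀)) + ((γ s₀ + (1/l) • N s₀) - γ t) := by
    abel
  rw [hsplit, inner_add_left]
  have h1 : |⟪z - (γ s₀ + (1/l) • N s₀), N t⟫| ≤ ‖z - (γ s₀ + (1/l) • N s₀)‖ * ‖N t‖ :=
    abs_real_inner_le_norm _ _
  rw [hNunit t, mul_one] at h1
  have h2 : ‖z - (γ s₀ + (1/l) • N s₀)‖ ≤ 1/l := by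
    rw [← dist_eq_norm]
    exact Metric.mem_closedBall.mp hz
  have h3 := neg_abs_le ⟪z - (γ s₀ + (1/l) • N s₀), N t⟫
  linarith
end
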